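/- arXiv:2311.13180 — 3 statements merged into one kernel-verified Lean document; each statement's English description precedes it below -/
import Mathlib

section
/- Let Θ be a rank-r matrix in R^{d1×d2} with induced subspace pair (M, M̄⊥), and let Σ and Σ̂' be positive semidefinite d1d2 × d1d2 matrices. If Σ satisfies the matrix compatibility condition C(M, M̄⊥, φ1) for some φ1 > 0 and ||Σ̂' − Σ||_op ≤ φ1²/(4r), then Σ̂' satisfies the matrix compatibility condition C(M, M̄⊥, φ1/√2). -/
open MeasureTheory ProbabilityTheory Matrix Finset Real

namespace BanditPaper


instance matrixMeasurableSpace {m n : Type*} : MeasurableSpace (Matrix m n ℝ) :=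
  inferInstanceAs (MeasurableSpace (m → n → ℝ))

/-- Frobenius inner product of two matrices. -/
def finner {d1 d2 : ℕ} (A B : Matrix (Fin d1) (Fin d2) ℝ) : ℝ := ∑ i, ∑ j, A i j * B i j

/-- Frobenius norm. -/
noncomputable def frobNorm {d1 d2 : ℕ} (A : Matrix (Fin d1) (Fin d2) ℝ) : ℝ :=
  Real.sqrt (finner A A)

/-- Nuclear norm: the sum of the singular values. -/
noncomputable def nuclearNorm {d1 d2 : ℕ} (A : Matrix (Fin d1) (Fin d2) ℝ) : ℝ :=
  ∑ j, Real.sqrt ((show (Aᵀ * A).IsHermitian by simpa [Matrix.conjTranspose_eq_transpose_of_trivial] using Matrix.isHermitian_conjTranspose_mul_self A).eigenvalues j)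

/-- ℓ² operator norm: the largest singular value. -/
noncomputable def opNorm {m n : Type*} [Fintype m] [Fintype n] [DecidableEq n]
    (A : Matrix m n ℝ) : ℝ :=
  ⨆ j, Real.sqrt ((show (Aᵀ * A).IsHermitian by simpa [Matrix.conjTranspose_eq_transpose_of_trivial] using Matrix.isHermitian_conjTranspose_mul_self A).eigenvalues j)

/-- Column span of a matrix. -/
def colSpan {d1 d2 : ℕ} (A : Matrix (Fin d1) (Fin d2) ℝ) : Submodule ℝ (Fin d1 → ℝ) :=
  LinearMap.range A.mulVecLin

/-- Row span of a matrix. -/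
def rowSpan {d1 d2 : ℕ} (A : Matrix (Fin d1) (Fin d2) ℝ) : Submodule ℝ (Fin d2 → ℝ) :=
  LinearMap.range Aᵀ.mulVecLin

/-- Orthogonal complement of a subspace of `ℝ^n` (with respect to the dot product). -/
def vperp {n : Type*} [Fintype n] (S : Submodule ℝ (n → ℝ)) : Submodule ℝ (n → ℝ) where
  carrier := {v | ∀ w ∈ S, v ⬝ᵥ w = 0}
  add_mem' := by
    intro a b ha hb w hw
    simp only [Set.mem_setOf_eq] at ha hb ⊢
    simp [add_dotProduct, ha w hw, hb w hw]
  zero_mem' := by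
    intro w hw
    simp
  smul_mem' := by
    intro c a ha w hw
    simp only [Set.mem_setOf_eq] at ha ⊢
    simp [smul_dotProduct, ha w hw]

/-- The subspace `M(U, V)` of matrices with column span inside `U` and row span inside `V`. -/
def Mspace {d1 d2 : ℕ} (U : Submodule ℝ (Fin d1 → ℝ)) (V : Submodule ℝ (Fin d2 → ℝ)) :
    Set (Matrix (Fin d1) (Fin d2) ℝ) :=
  {A | colSpan A ≤ U ∧ rowSpan A ≤ V}

/-- The subspace `M̄⊥(U, V)`. -/
def MbarPerp {d1 d2 : ℕ} (U : Submodule ℝ (Fin d1 → ℝ)) (V : Submodule ℝ (Fin d2 → ℝ)) :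
    Set (Matrix (Fin d1) (Fin d2) ℝ) :=
  Mspace (vperp U) (vperp V)

/-- `P` is the Frobenius-orthogonal projection onto `M̄⊥(U, V)`; the projection onto `M̄(U,V)`
is then `id - P`. -/
def IsPerpProj {d1 d2 : ℕ} (U : Submodule ℝ (Fin d1 → ℝ)) (V : Submodule ℝ (Fin d2 → ℝ))
    (P : Matrix (Fin d1) (Fin d2) ℝ →ₗ[ℝ] Matrix (Fin d1) (Fin d2) ℝ) : Prop :=
  (∀ Δ, P Δ ∈ MbarPerp U V) ∧
  (∀ Δ, ∀ B ∈ MbarPerp U V, finner (Δ - P Δ) B = 0)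

/-- `(U, V)` is a subspace pair induced by a matrix `Θ` of rank at most `r`. -/
def InducedPair {d1 d2 : ℕ} (Θ : Matrix (Fin d1) (Fin d2) ℝ) (r : ℕ)
    (U : Submodule ℝ (Fin d1 → ℝ)) (V : Submodule ℝ (Fin d2 → ℝ)) : Prop :=
  Θ.rank ≤ r ∧ colSpan Θ ≤ U ∧ rowSpan Θ ≤ V ∧
    Module.finrank ℝ U = r ∧ Module.finrank ℝ V = r

/-- Vectorization of a matrix. -/
def vecM {d1 d2 : ℕ} (A : Matrix (Fin d1) (Fin d2) ℝ) : Fin d1 × Fin d2 → ℝ :=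
  fun p => A p.1 p.2

/-- The matrix compatibility condition `C(M, M̄⊥, φ)`. -/
def MatCompat {d1 d2 : ℕ} (U : Submodule ℝ (Fin d1 → ℝ)) (V : Submodule ℝ (Fin d2 → ℝ))
    (P : Matrix (Fin d1) (Fin d2) ℝ →ₗ[ℝ] Matrix (Fin d1) (Fin d2) ℝ) (φ : ℝ)
    (M' : Matrix (Fin d1 × Fin d2) (Fin d1 × Fin d2) ℝ) : Prop :=
  M'.PosSemidef ∧ ∀ Δ : Matrix (Fin d1) (Fin d2) ℝ,
    nuclearNorm (P Δ) ≤ 3 * nuclearNorm (Δ - P Δ) →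
    frobNorm (Δ - P Δ) ^ 2 ≤ vecM Δ ⬝ᵥ M'.mulVec (vecM Δ) / (4 * φ) ^ 2

/-- Nuclear-norm regularized least-squares estimator. -/
def IsNuclearEstimator {d1 d2 : ℕ} {ι : Type*} (A : Finset ι)
    (X : ι → Matrix (Fin d1) (Fin d2) ℝ) (r : ι → ℝ) (lam : ℝ)
    (Th : Matrix (Fin d1) (Fin d2) ℝ) : Prop :=
  ∀ Th' : Matrix (Fin d1) (Fin d2) ℝ,
    (∑ t ∈ A, (r t - finner (X t) Th) ^ 2) / A.card + lam * nuclearNorm Th ≤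
    (∑ t ∈ A, (r t - finner (X t) Th') ^ 2) / A.card + lam * nuclearNorm Th'

/-- The constant `C1(φ) = φ⁴/(96 r σ κ0)²` for the low-rank setting. -/
noncomputable def matC1 (r : ℕ) (σ κ0 φ : ℝ) : ℝ := φ ^ 4 / (96 * r * σ * κ0) ^ 2

/-- The constant `C2(φ) = φ²/(4 κ0 √(2r(4rκ0² + φ²)))` for the low-rank setting. -/
noncomputable def matC2 (r : ℕ) (κ0 φ : ℝ) : ℝ :=
  φ ^ 2 / (4 * κ0 * Real.sqrt (2 * r * (4 * r * κ0 ^ 2 + φ ^ 2)))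



/-! ### Auxiliary lemmas -/

section Aux

open Matrix

lemma Matrix.isHermitian_transpose_mul_self {m n : Type*} [Fintype m] (A : Matrix m n ℝ) :
    (Aᵀ * A).IsHermitian := by
  simpa [Matrix.conjTranspose_eq_transpose_of_trivial] using
    Matrix.isHermitian_conjTranspose_mul_self A

/-- Frobenius inner product is symmetric. -/
lemma finner_comm {d1 d2 : ℕ} (A B : Matrix (Fin d1) (Fin d2) ℝ) : finner A B = finner B A := by
  simp [finner, mul_comm]

lemma finner_add_left {d1 d2 : ℕ} (A C B : Matrix (Fin d1) (Fin d2) ℝ) :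
    finner (A + C) B = finner A B + finner C B := by
  simp [finner, add_mul, Finset.sum_add_distrib]

lemma finner_add_right {d1 d2 : ℕ} (A B C : Matrix (Fin d1) (Fin d2) ℝ) :
    finner A (B + C) = finner A B + finner A C := by
  rw [finner_comm, finner_add_left, finner_comm B A, finner_comm C A]

lemma finner_expand {d1 d2 : ℕ} (X Y : Matrix (Fin d1) (Fin d2) ℝ) :
    finner (X + Y) (X + Y) = finner X X + 2 * finner X Y + finner Y Y := by
  rw [finner_add_left, finner_add_right, finner_add_right, finner_comm Y X]
  ring

lemma finner_self_nonneg {d1 d2 : ℕ} (A : Matrix (Fin d1) (Fin d2) ℝ) : 0 ≤ finner A A :=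
  Finset.sum_nonneg fun _ _ => Finset.sum_nonneg fun _ _ => mul_self_nonneg _

lemma frobNorm_nonneg {d1 d2 : ℕ} (A : Matrix (Fin d1) (Fin d2) ℝ) : 0 ≤ frobNorm A :=
  Real.sqrt_nonneg _

lemma frobNorm_sq {d1 d2 : ℕ} (A : Matrix (Fin d1) (Fin d2) ℝ) :
    frobNorm A ^ 2 = finner A A :=
  Real.sq_sqrt (finner_self_nonneg A)

lemma finner_self_eq_zero {d1 d2 : ℕ} {A : Matrix (Fin d1) (Fin d2) ℝ}
    (h : finner A A = 0) : A = 0 := by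
  ext i j
  have h1 : ∀ i ∈ (Finset.univ : Finset (Fin d1)), (0:ℝ) ≤ ∑ j, A i j * A i j :=
    fun i _ => Finset.sum_nonneg fun _ _ => mul_self_nonneg _
  have h2 := (Finset.sum_eq_zero_iff_of_nonneg h1).mp h i (Finset.mem_univ i)
  have h3 := (Finset.sum_eq_zero_iff_of_nonneg
    (fun j _ => mul_self_nonneg (A i j))).mp h2 j (Finset.mem_univ j)
  simpa [mul_self_eq_zero] using h3

lemma finner_eq_trace {d1 d2 : ℕ} (A B : Matrix (Fin d1) (Fin d2) ℝ) :
    finner A B = Matrix.trace (Aᵀ * B) := by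
  rw [Matrix.trace]
  simp only [Matrix.diag, Matrix.mul_apply, Matrix.transpose_apply]
  rw [finner, Finset.sum_comm]

/-- The trace of a real symmetric matrix is the sum of its eigenvalues. -/
lemma trace_eq_sum_eigenvalues {n : Type*} [Fintype n] [DecidableEq n] {H : Matrix n n ℝ}
    (hH : H.IsHermitian) : H.trace = ∑ i, hH.eigenvalues i := by
  conv_lhs => rw [hH.spectral_theorem, Unitary.conjStarAlgAut_apply]
  rw [Matrix.trace_mul_comm, ← mul_assoc, Unitary.coe_star_mul_self, one_mul]
  simp [Matrix.trace_diagonal]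

lemma eig_nonneg {m n : Type*} [Fintype m] [Fintype n] [DecidableEq n] (A : Matrix m n ℝ)
    (j : n) : 0 ≤ (Matrix.isHermitian_transpose_mul_self A).eigenvalues j :=
  (Matrix.posSemidef_conjTranspose_mul_self A).eigenvalues_nonneg j

lemma finner_self_eq_sum_eigs {d1 d2 : ℕ} (A : Matrix (Fin d1) (Fin d2) ℝ) :
    finner A A = ∑ j, (Matrix.isHermitian_transpose_mul_self A).eigenvalues j := by
  have hAt : Aᵀ = Aᴴ := (Matrix.conjTranspose_eq_transpose_of_trivial A).symm
  rw [finner_eq_trace, trace_eq_sum_eigenvalues (Matrix.isHermitian_transpose_mul_self A)]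

lemma frobNorm_le_nuclearNorm {d1 d2 : ℕ} (A : Matrix (Fin d1) (Fin d2) ℝ) :
    frobNorm A ≤ nuclearNorm A := by
  rw [frobNorm, finner_self_eq_sum_eigs, nuclearNorm]
  have h1 : ∑ j, (Matrix.isHermitian_transpose_mul_self A).eigenvalues j
      = ∑ j, (Real.sqrt ((Matrix.isHermitian_transpose_mul_self A).eigenvalues j)) ^ 2 := by
    refine Finset.sum_congr rfl fun j _ => ?_
    rw [Real.sq_sqrt (eig_nonneg A j)]
  rw [h1]
  have h2 : ∑ j, (Real.sqrt ((Matrix.isHermitian_transpose_mul_self A).eigenvalues j)) ^ 2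
      ≤ (∑ j, Real.sqrt ((Matrix.isHermitian_transpose_mul_self A).eigenvalues j)) ^ 2 :=
    Finset.sum_sq_le_sq_sum_of_nonneg fun j _ => Real.sqrt_nonneg _
  calc Real.sqrt (∑ j, (Real.sqrt ((Matrix.isHermitian_transpose_mul_self A).eigenvalues j)) ^ 2)
      ≤ Real.sqrt ((∑ j, Real.sqrt ((Matrix.isHermitian_transpose_mul_self A).eigenvalues j)) ^ 2) :=
        Real.sqrt_le_sqrt h2
    _ = _ := Real.sqrt_sq (Finset.sum_nonneg fun j _ => Real.sqrt_nonneg _)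

lemma nuclearNorm_nonneg {d1 d2 : ℕ} (A : Matrix (Fin d1) (Fin d2) ℝ) : 0 ≤ nuclearNorm A :=
  Finset.sum_nonneg fun _ _ => Real.sqrt_nonneg _

/-- Nuclear norm is at most `√rank` times the Frobenius norm. -/
lemma nuclearNorm_le_sqrt_rank_mul_frobNorm {d1 d2 : ℕ} (A : Matrix (Fin d1) (Fin d2) ℝ) :
    nuclearNorm A ≤ Real.sqrt A.rank * frobNorm A := by
  classical
  set eig := (Matrix.isHermitian_transpose_mul_self A).eigenvalues with heig
  set s : Finset (Fin d2) := Finset.univ.filter (fun j => eig j ≠ 0) with hs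
  have hsub : nuclearNorm A = ∑ j ∈ s, Real.sqrt (eig j) := by
    rw [nuclearNorm, ← heig]
    refine (Finset.sum_subset (Finset.subset_univ s) fun j _ hj => ?_).symm
    have : eig j = 0 := by
      by_contra hne
      exact hj (by simp [hs, hne])
    rw [this, Real.sqrt_zero]
  have hcs : (∑ j ∈ s, Real.sqrt (eig j) * 1) ^ 2 ≤
      (∑ j ∈ s, Real.sqrt (eig j) ^ 2) * (∑ _j ∈ s, (1:ℝ) ^ 2) :=
    Finset.sum_mul_sq_le_sq_mul_sq s _ _
  have hcard : (∑ _j ∈ s, (1:ℝ) ^ 2) = (A.rank : ℝ) := by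
    have hrank : A.rank = s.card := by
      have hAt : Aᴴ = Aᵀ := Matrix.conjTranspose_eq_transpose_of_trivial A
      rw [← Matrix.rank_transpose_mul_self A,
        (Matrix.isHermitian_transpose_mul_self A).rank_eq_card_non_zero_eigs,
        Fintype.card_subtype]
    simp [hrank]
  have hsq : ∑ j ∈ s, Real.sqrt (eig j) ^ 2 ≤ finner A A := by
    rw [finner_self_eq_sum_eigs, ← heig]
    refine le_trans (le_of_eq (Finset.sum_congr rfl fun j _ => Real.sq_sqrt (eig_nonneg A j)))
      (Finset.sum_le_sum_of_subset_of_nonneg (Finset.subset_univ s)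
        fun j _ _ => eig_nonneg A j)
  have h1 : (nuclearNorm A) ^ 2 ≤ (A.rank : ℝ) * finner A A := by
    rw [hsub]
    calc (∑ j ∈ s, Real.sqrt (eig j)) ^ 2 = (∑ j ∈ s, Real.sqrt (eig j) * 1) ^ 2 := by simp
      _ ≤ (∑ j ∈ s, Real.sqrt (eig j) ^ 2) * (∑ _j ∈ s, (1:ℝ) ^ 2) := hcs
      _ ≤ finner A A * (A.rank : ℝ) := by
          rw [hcard]
          exact mul_le_mul_of_nonneg_right hsq (Nat.cast_nonneg _)
      _ = (A.rank : ℝ) * finner A A := mul_comm _ _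
  have h2 : Real.sqrt A.rank * frobNorm A = Real.sqrt ((A.rank : ℝ) * finner A A) := by
    rw [frobNorm, ← Real.sqrt_mul (Nat.cast_nonneg _)]
  rw [h2]
  calc nuclearNorm A = Real.sqrt ((nuclearNorm A) ^ 2) :=
        (Real.sqrt_sq (nuclearNorm_nonneg A)).symm
    _ ≤ Real.sqrt ((A.rank : ℝ) * finner A A) := Real.sqrt_le_sqrt h1

/-- Quadratic forms of symmetric matrices are bounded by the largest eigenvalue. -/
lemma quad_form_le {n : Type*} [Fintype n] [DecidableEq n] {H : Matrix n n ℝ}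
    (hH : H.IsHermitian) (c : ℝ) (hc : ∀ i, hH.eigenvalues i ≤ c) (x : n → ℝ) :
    x ⬝ᵥ H *ᵥ x ≤ c * (x ⬝ᵥ x) := by
  set U : Matrix n n ℝ := (hH.eigenvectorUnitary : Matrix n n ℝ) with hUdef
  set y : n → ℝ := Uᵀ *ᵥ x with hy
  have hstar : star U = Uᵀ := by
    rw [Matrix.star_eq_conjTranspose, Matrix.conjTranspose_eq_transpose_of_trivial]
  have h1 : x ⬝ᵥ H *ᵥ x = ∑ i, hH.eigenvalues i * (y i)^2 := by
    conv_lhs => rw [hH.spectral_theorem, Unitary.conjStarAlgAut_apply]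
    rw [← hUdef, hstar, ← Matrix.mulVec_mulVec, ← Matrix.mulVec_mulVec,
      Matrix.dotProduct_mulVec, ← Matrix.mulVec_transpose]
    simp only [dotProduct, Matrix.mulVec_diagonal, ← hy]
    exact Finset.sum_congr rfl fun i _ => by simp; ring
  have h2 : y ⬝ᵥ y = x ⬝ᵥ x := by
    have hUU : U * Uᵀ = 1 := by
      rw [← hstar]; exact (Matrix.mem_unitaryGroup_iff).mp hH.eigenvectorUnitary.2
    have : y ⬝ᵥ y = x ⬝ᵥ ((U * Uᵀ) *ᵥ x) := by
      rw [hy, ← Matrix.mulVec_mulVec, Matrix.dotProduct_mulVec, ← Matrix.mulVec_transpose,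
        Matrix.transpose_transpose, dotProduct_comm]
    rw [this, hUU, Matrix.one_mulVec]
  have h3 : ∑ i, hH.eigenvalues i * (y i)^2 ≤ ∑ i, c * (y i)^2 :=
    Finset.sum_le_sum fun i _ => mul_le_mul_of_nonneg_right (hc i) (sq_nonneg _)
  rw [h1, ← h2]
  calc _ ≤ ∑ i, c * (y i)^2 := h3
    _ = c * (y ⬝ᵥ y) := by rw [← Finset.mul_sum]; simp [dotProduct, pow_two]

lemma opNorm_nonneg {m n : Type*} [Fintype m] [Fintype n] [DecidableEq n]
    (A : Matrix m n ℝ) : 0 ≤ opNorm A := by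
  show (0:ℝ) ≤ ⨆ j, Real.sqrt ((Matrix.isHermitian_transpose_mul_self A).eigenvalues j)
  exact Real.iSup_nonneg fun _ => Real.sqrt_nonneg _

lemma dotProduct_self_nonneg' {n : Type*} [Fintype n] (x : n → ℝ) : 0 ≤ x ⬝ᵥ x :=
  Finset.sum_nonneg fun _ _ => mul_self_nonneg _

/-- Quadratic-form perturbation bound via the operator norm. -/
lemma abs_quad_le_opNorm {n : Type*} [Fintype n] [DecidableEq n] (D : Matrix n n ℝ)
    (x : n → ℝ) : |x ⬝ᵥ D *ᵥ x| ≤ opNorm D * (x ⬝ᵥ x) := by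
  have heig : ∀ i, (Matrix.isHermitian_transpose_mul_self D).eigenvalues i ≤ opNorm D ^ 2 := by
    intro i
    have hle : Real.sqrt ((Matrix.isHermitian_transpose_mul_self D).eigenvalues i) ≤ opNorm D := by
      show Real.sqrt ((Matrix.isHermitian_transpose_mul_self D).eigenvalues i)
        ≤ ⨆ j, Real.sqrt ((Matrix.isHermitian_transpose_mul_self D).eigenvalues j)
      exact le_ciSup (Set.Finite.bddAbove (Set.finite_range
        (fun j => Real.sqrt ((Matrix.isHermitian_transpose_mul_self D).eigenvalues j)))) i
    calc (Matrix.isHermitian_transpose_mul_self D).eigenvalues i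
        = (Real.sqrt ((Matrix.isHermitian_transpose_mul_self D).eigenvalues i)) ^ 2 :=
          (Real.sq_sqrt (eig_nonneg D i)).symm
      _ ≤ opNorm D ^ 2 := pow_le_pow_left₀ (Real.sqrt_nonneg _) hle 2
  have h1 : x ⬝ᵥ (Dᴴ * D) *ᵥ x ≤ opNorm D ^ 2 * (x ⬝ᵥ x) :=
    quad_form_le (Matrix.isHermitian_transpose_mul_self D) _ heig x
  have h3 : (D *ᵥ x) ⬝ᵥ (D *ᵥ x) = x ⬝ᵥ (Dᴴ * D) *ᵥ x := by
    rw [Matrix.conjTranspose_eq_transpose_of_trivial,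
      ← Matrix.mulVec_mulVec, Matrix.dotProduct_mulVec (v := x), Matrix.vecMul_transpose]
  have h2 : (x ⬝ᵥ D *ᵥ x) ^ 2 ≤ (x ⬝ᵥ x) * ((D *ᵥ x) ⬝ᵥ (D *ᵥ x)) := by
    have := Finset.sum_mul_sq_le_sq_mul_sq Finset.univ x (D *ᵥ x)
    simpa [dotProduct, pow_two] using this
  have hxx := dotProduct_self_nonneg' x
  have hop := opNorm_nonneg D
  rw [h3] at h2
  have h4 : (x ⬝ᵥ D *ᵥ x) ^ 2 ≤ (opNorm D * (x ⬝ᵥ x)) ^ 2 := by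
    calc (x ⬝ᵥ D *ᵥ x) ^ 2 ≤ (x ⬝ᵥ x) * (opNorm D ^ 2 * (x ⬝ᵥ x)) :=
          h2.trans (mul_le_mul_of_nonneg_left h1 hxx)
      _ = (opNorm D * (x ⬝ᵥ x)) ^ 2 := by ring
  have h5 : 0 ≤ opNorm D * (x ⬝ᵥ x) := mul_nonneg hop hxx
  rcases abs_cases (x ⬝ᵥ D *ᵥ x) with ⟨he, _⟩ | ⟨he, _⟩ <;> rw [he] <;> nlinarith [h4, h5]

end Aux

section Proj

open Matrix

variable {n : ℕ}

/-- View a submodule of `Fin n → ℝ` inside `EuclideanSpace ℝ (Fin n)`. -/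
noncomputable def ES (S : Submodule ℝ (Fin n → ℝ)) : Submodule ℝ (EuclideanSpace ℝ (Fin n)) :=
  S.comap (WithLp.linearEquiv 2 ℝ (Fin n → ℝ)).toLinearMap

lemma mem_ES {S : Submodule ℝ (Fin n → ℝ)} {x : EuclideanSpace ℝ (Fin n)} :
    x ∈ ES S ↔ WithLp.ofLp x ∈ S := Iff.rfl

/-- Explicit conversion into Euclidean space. -/
noncomputable def toE (v : Fin n → ℝ) : EuclideanSpace ℝ (Fin n) := (WithLp.equiv 2 _).symm v

lemma toE_mem_ES {S : Submodule ℝ (Fin n → ℝ)} {w : Fin n → ℝ} (hw : w ∈ S) :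
    toE w ∈ ES S := hw

/-- The matrix of the orthogonal projection onto `S`. -/
noncomputable def projQ (S : Submodule ℝ (Fin n → ℝ)) : Matrix (Fin n) (Fin n) ℝ :=
  fun i j => (ES S).starProjection (toE (Pi.single j 1)) i

lemma euclid_decomp (v : Fin n → ℝ) :
    toE v = ∑ j, v j • toE (Pi.single j 1) := by
  ext i
  simp [toE, Pi.single_apply]

lemma projQ_mulVec (S : Submodule ℝ (Fin n → ℝ)) (v : Fin n → ℝ) :
    projQ S *ᵥ v = WithLp.ofLp ((ES S).starProjection (toE v)) := by
  have key : (ES S).starProjection (toE v)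
      = ∑ j, v j • (ES S).starProjection (toE (Pi.single j 1)) := by
    rw [euclid_decomp v, map_sum]
    simp only [map_smul]
  funext i
  rw [key]
  simp [projQ, Matrix.mulVec, dotProduct, mul_comm]

lemma projQ_mulVec_mem (S : Submodule ℝ (Fin n → ℝ)) (v : Fin n → ℝ) :
    projQ S *ᵥ v ∈ S := by
  rw [projQ_mulVec]
  exact mem_ES.mp (Submodule.starProjection_apply_mem _ _)

lemma projQ_mulVec_of_mem (S : Submodule ℝ (Fin n → ℝ)) {v : Fin n → ℝ} (hv : v ∈ S) :
    projQ S *ᵥ v = v := by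
  rw [projQ_mulVec, Submodule.starProjection_eq_self_iff.mpr (toE_mem_ES hv)]
  rfl

/-- Real inner product on Euclidean space agrees with the dot product. -/
lemma euclid_inner_eq_dot (x y : EuclideanSpace ℝ (Fin n)) :
    inner ℝ x y = WithLp.ofLp x ⬝ᵥ WithLp.ofLp y := by
  simp [PiLp.inner_apply, dotProduct, mul_comm]

lemma sub_projQ_mulVec_perp (S : Submodule ℝ (Fin n → ℝ)) (v : Fin n → ℝ) {w : Fin n → ℝ}
    (hw : w ∈ S) : (v - projQ S *ᵥ v) ⬝ᵥ w = 0 := by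
  have h := Submodule.sub_starProjection_mem_orthogonal (K := ES S) (toE v)
  have h2 := (Submodule.mem_orthogonal' _ _).mp h (toE w) (toE_mem_ES hw)
  rw [euclid_inner_eq_dot] at h2
  rw [projQ_mulVec]
  exact h2

lemma projQ_transpose (S : Submodule ℝ (Fin n → ℝ)) : (projQ S)ᵀ = projQ S := by
  ext i j
  have hsingle : ∀ (x : EuclideanSpace ℝ (Fin n)) (k : Fin n),
      inner ℝ x (toE (Pi.single k 1)) = x k := by
    intro x k
    rw [euclid_inner_eq_dot]
    show WithLp.ofLp x ⬝ᵥ (Pi.single k 1) = x k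
    rw [dotProduct_single, mul_one]
  rw [Matrix.transpose_apply]
  show (ES S).starProjection (toE (Pi.single i 1)) j
    = (ES S).starProjection (toE (Pi.single j 1)) i
  calc (ES S).starProjection (toE (Pi.single i 1)) j
      = inner ℝ ((ES S).starProjection (toE (Pi.single i 1))) (toE (Pi.single j 1)) :=
        (hsingle _ j).symm
    _ = inner ℝ (toE (Pi.single i 1)) ((ES S).starProjection (toE (Pi.single j 1))) :=
        Submodule.inner_starProjection_left_eq_right _ _ _
    _ = inner ℝ ((ES S).starProjection (toE (Pi.single j 1))) (toE (Pi.single i 1)) :=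
        real_inner_comm _ _
    _ = _ := hsingle _ i

lemma projQ_idem (S : Submodule ℝ (Fin n → ℝ)) : projQ S * projQ S = projQ S := by
  ext i j
  have h : (projQ S * projQ S) *ᵥ (Pi.single j 1) = projQ S *ᵥ (Pi.single j 1) := by
    rw [← Matrix.mulVec_mulVec]
    exact projQ_mulVec_of_mem S (projQ_mulVec_mem S _)
  have := congrFun h i
  simpa [Matrix.mulVec_single_one] using this

lemma rank_projQ_le (S : Submodule ℝ (Fin n → ℝ)) :
    (projQ S).rank ≤ Module.finrank ℝ S := by
  rw [Matrix.rank]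
  have hle : LinearMap.range (projQ S).mulVecLin ≤ S := by
    rintro x ⟨y, rfl⟩
    rw [Matrix.mulVecLin_apply]
    exact projQ_mulVec_mem S y
  exact Submodule.finrank_mono hle

end Proj

section Rank

open Matrix

lemma matrix_rank_add_le {m n : Type*} [Fintype m] [Fintype n]
    (A B : Matrix m n ℝ) : (A + B).rank ≤ A.rank + B.rank := by
  rw [Matrix.rank, Matrix.rank, Matrix.rank]
  have hle : LinearMap.range (A + B).mulVecLin ≤
      LinearMap.range A.mulVecLin ⊔ LinearMap.range B.mulVecLin := by
    rintro x ⟨y, rfl⟩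
    rw [Matrix.mulVecLin_add]
    exact Submodule.add_mem_sup (LinearMap.mem_range_self _ y) (LinearMap.mem_range_self _ y)
  exact le_trans (Submodule.finrank_mono hle)
    (Submodule.finrank_add_le_finrank_add_finrank _ _)

end Rank

section Main

open Matrix

lemma rank_sub_proj_le {d1 d2 : ℕ} (U : Submodule ℝ (Fin d1 → ℝ)) (V : Submodule ℝ (Fin d2 → ℝ))
    (P : Matrix (Fin d1) (Fin d2) ℝ →ₗ[ℝ] Matrix (Fin d1) (Fin d2) ℝ)
    (hP : IsPerpProj U V P) (Δ : Matrix (Fin d1) (Fin d2) ℝ) :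
    (Δ - P Δ).rank ≤ Module.finrank ℝ U + Module.finrank ℝ V := by
  classical
  set Q1 : Matrix (Fin d1) (Fin d1) ℝ := projQ U with hQ1
  set Q2 : Matrix (Fin d2) (Fin d2) ℝ := projQ V with hQ2
  set A : Matrix (Fin d1) (Fin d2) ℝ := Δ - P Δ with hA
  set B : Matrix (Fin d1) (Fin d2) ℝ := (1 - Q1) * A * (1 - Q2) with hB
  -- B belongs to M̄⊥
  have hBmem : B ∈ MbarPerp U V := by
    constructor
    · rintro x ⟨y, rfl⟩
      rw [Matrix.mulVecLin_apply]
      intro w hw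
      have hBv : B *ᵥ y = ((A * (1 - Q2)) *ᵥ y) - Q1 *ᵥ ((A * (1 - Q2)) *ᵥ y) := by
        rw [hB, Matrix.mul_assoc, ← Matrix.mulVec_mulVec, Matrix.sub_mulVec, Matrix.one_mulVec]
      rw [hBv]
      exact sub_projQ_mulVec_perp U _ hw
    · rintro x ⟨y, rfl⟩
      rw [Matrix.mulVecLin_apply]
      intro w hw
      have hBt : Bᵀ = (1 - Q2) * ((Aᵀ * (1 - Q1))) := by
        rw [hB, hQ1, hQ2]
        simp only [Matrix.transpose_mul, Matrix.transpose_sub, Matrix.transpose_one,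
          projQ_transpose, Matrix.mul_assoc]
      have hBv : Bᵀ *ᵥ y = ((Aᵀ * (1 - Q1)) *ᵥ y) - Q2 *ᵥ ((Aᵀ * (1 - Q1)) *ᵥ y) := by
        rw [hBt, ← Matrix.mulVec_mulVec, Matrix.sub_mulVec, Matrix.one_mulVec]
      rw [hBv]
      exact sub_projQ_mulVec_perp V _ hw
  have hfAB : finner A B = 0 := hP.2 Δ B hBmem
  have hQ1idem : Q1 * (1 - Q1) = 0 := by
    rw [mul_sub, mul_one, hQ1, projQ_idem, sub_self]
  have hQ2idem : (1 - Q2) * Q2 = 0 := by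
    rw [sub_mul, one_mul, hQ2, projQ_idem, sub_self]
  have hsub1 : (1 - Q1) * A = A - Q1 * A := by
    rw [Matrix.sub_mul, Matrix.one_mul]
  have hBsum : B = A - Q1 * A - (A - Q1 * A) * Q2 := by
    rw [hB, hsub1, Matrix.mul_sub, Matrix.mul_one]
  -- finner (A - B) B = 0
  have hfsub : finner (A - B) B = 0 := by
    have hdecomp : A - B = Q1 * A + ((1 - Q1) * A) * Q2 := by
      rw [hBsum, hsub1]
      abel
    rw [hdecomp, finner_add_left]
    have h1 : finner (Q1 * A) B = 0 := by
      rw [finner_eq_trace]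
      have hQB : Q1 * B = 0 := by
        rw [hB, Matrix.mul_assoc (1 - Q1) A (1 - Q2), ← Matrix.mul_assoc Q1 (1 - Q1) _,
          hQ1idem, Matrix.zero_mul]
      have ht : (Q1 * A)ᵀ * B = Aᵀ * (Q1 * B) := by
        rw [Matrix.transpose_mul, hQ1, projQ_transpose, Matrix.mul_assoc]
      rw [ht, hQB, Matrix.mul_zero, Matrix.trace_zero]
    have h2 : finner (((1 - Q1) * A) * Q2) B = 0 := by
      rw [finner_eq_trace]
      have hBQ : B * Q2 = 0 := by
        rw [hB, Matrix.mul_assoc ((1 - Q1) * A) (1 - Q2) Q2, hQ2idem, Matrix.mul_zero]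
      have ht : (((1 - Q1) * A) * Q2)ᵀ * B = Q2 * (((1 - Q1) * A)ᵀ * B) := by
        rw [Matrix.transpose_mul (((1:Matrix (Fin d1) (Fin d1) ℝ) - Q1) * A) Q2, hQ2,
          projQ_transpose, Matrix.mul_assoc]
      rw [ht, Matrix.trace_mul_comm, Matrix.mul_assoc, hBQ, Matrix.mul_zero,
        Matrix.trace_zero]
    rw [h1, h2, add_zero]
  have hfBB : finner B B = 0 := by
    have hds : A = (A - B) + B := by abel
    have : finner A B = finner (A - B) B + finner B B := by
      calc finner A B = finner ((A - B) + B) B := by rw [← hds]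
        _ = finner (A - B) B + finner B B := finner_add_left _ _ _
    rw [hfAB, hfsub] at this
    linarith
  have hB0 : B = 0 := finner_self_eq_zero hfBB
  have hArw : A = Q1 * A + ((1 - Q1) * A) * Q2 := by
    have h : A = Q1 * A + ((1 - Q1) * A) * Q2 + B := by
      rw [hBsum, hsub1]
      abel
    conv_lhs => rw [h, hB0]
    rw [add_zero]
  calc A.rank = (Q1 * A + ((1 - Q1) * A) * Q2).rank := by rw [← hArw]
    _ ≤ (Q1 * A).rank + (((1 - Q1) * A) * Q2).rank := matrix_rank_add_le _ _
    _ ≤ Q1.rank + Q2.rank :=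
        add_le_add (Matrix.rank_mul_le_left _ _) (Matrix.rank_mul_le_right _ _)
    _ ≤ Module.finrank ℝ U + Module.finrank ℝ V :=
        add_le_add (rank_projQ_le U) (rank_projQ_le V)

lemma vecM_dot_self {d1 d2 : ℕ} (A : Matrix (Fin d1) (Fin d2) ℝ) :
    vecM A ⬝ᵥ vecM A = finner A A := by
  rw [dotProduct, finner, Fintype.sum_prod_type]
  rfl

end Main


/-- the matrix compatibility condition is stable under operator-norm
perturbations (Lemma C.5 / `lemi03` of the paper). -/
theorem matcompat_stable_under_perturbation
    {d1 d2 r : ℕ} (hr : 1 ≤ r) (φ1 : ℝ) (hφ1 : 0 < φ1)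
    (Θ : Matrix (Fin d1) (Fin d2) ℝ)
    (U : Submodule ℝ (Fin d1 → ℝ)) (V : Submodule ℝ (Fin d2 → ℝ))
    (P : Matrix (Fin d1) (Fin d2) ℝ →ₗ[ℝ] Matrix (Fin d1) (Fin d2) ℝ)
    (hUV : InducedPair Θ r U V) (hP : IsPerpProj U V P)
    (Sig SigHat : Matrix (Fin d1 × Fin d2) (Fin d1 × Fin d2) ℝ)
    (hSigPSD : Sig.PosSemidef) (hSigHatPSD : SigHat.PosSemidef)
    (hcompat : MatCompat U V P φ1 Sig)
    (hclose : opNorm (SigHat - Sig) ≤ φ1 ^ 2 / (4 * r)) :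
    MatCompat U V P (φ1 / Real.sqrt 2) SigHat := by
  refine ⟨hSigHatPSD, fun Δ hcone => ?_⟩
  have ha := hcompat.2 Δ hcone
  set a := frobNorm (Δ - P Δ) with haa
  set x := vecM Δ with hx
  have hr1 : (1:ℝ) ≤ (r:ℝ) := by exact_mod_cast hr
  have hrpos : (0:ℝ) < (r:ℝ) := lt_of_lt_of_le one_pos hr1
  -- Pythagoras
  have hperp : finner (Δ - P Δ) (P Δ) = 0 := hP.2 Δ (P Δ) (hP.1 Δ)
  have hpyth : finner Δ Δ = finner (Δ - P Δ) (Δ - P Δ) + finner (P Δ) (P Δ) := by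
    have h := finner_expand (Δ - P Δ) (P Δ)
    have hXY : Δ - P Δ + P Δ = Δ := by abel
    rw [hXY] at h
    rw [h, hperp]
    ring
  -- rank bound and nuclear norm bound
  have hrank : ((Δ - P Δ).rank : ℝ) ≤ 2 * r := by
    have h1 := rank_sub_proj_le U V P hP Δ
    rw [hUV.2.2.2.1, hUV.2.2.2.2] at h1
    have : ((Δ - P Δ).rank : ℝ) ≤ ((r + r : ℕ) : ℝ) := by exact_mod_cast h1
    calc ((Δ - P Δ).rank : ℝ) ≤ ((r + r : ℕ) : ℝ) := this
      _ = 2 * r := by push_cast; ring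
  have hnuc : nuclearNorm (Δ - P Δ) ≤ Real.sqrt (2 * r) * a := by
    calc nuclearNorm (Δ - P Δ) ≤ Real.sqrt ((Δ - P Δ).rank) * a :=
          nuclearNorm_le_sqrt_rank_mul_frobNorm _
      _ ≤ Real.sqrt (2 * r) * a :=
          mul_le_mul_of_nonneg_right (Real.sqrt_le_sqrt hrank) (frobNorm_nonneg _)
  have h2r : (0:ℝ) ≤ 2 * r := by positivity
  have hPP : finner (P Δ) (P Δ) ≤ 18 * r * a ^ 2 := by
    have h1 : frobNorm (P Δ) ≤ 3 * (Real.sqrt (2 * r) * a) :=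
      le_trans (frobNorm_le_nuclearNorm _)
        (le_trans hcone (by linarith [mul_le_mul_of_nonneg_left hnuc (by norm_num : (0:ℝ) ≤ 3)]))
    have h2 : finner (P Δ) (P Δ) = frobNorm (P Δ) ^ 2 := (frobNorm_sq _).symm
    have h3 : frobNorm (P Δ) ^ 2 ≤ (3 * (Real.sqrt (2 * r) * a)) ^ 2 :=
      pow_le_pow_left₀ (frobNorm_nonneg _) h1 2
    have h4 : (3 * (Real.sqrt (2 * r) * a)) ^ 2 = 9 * (2 * r) * a ^ 2 := by
      rw [mul_pow, mul_pow, Real.sq_sqrt h2r]; ring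
    rw [h2]
    calc frobNorm (P Δ) ^ 2 ≤ (3 * (Real.sqrt (2 * r) * a)) ^ 2 := h3
      _ = 9 * (2 * r) * a ^ 2 := h4
      _ = 18 * r * a ^ 2 := by ring
  have hfd : finner Δ Δ ≤ (1 + 18 * r) * a ^ 2 := by
    have : finner (Δ - P Δ) (Δ - P Δ) = a ^ 2 := (frobNorm_sq _).symm
    rw [hpyth, this] at *
    linarith
  have hfd0 : (0:ℝ) ≤ finner Δ Δ := finner_self_nonneg Δ
  -- operator norm perturbation
  have hxx : x ⬝ᵥ x = finner Δ Δ := vecM_dot_self Δ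
  have habs := abs_quad_le_opNorm (SigHat - Sig) x
  have hop0 : 0 ≤ opNorm (SigHat - Sig) := opNorm_nonneg _
  have hDlow : -(opNorm (SigHat - Sig) * finner Δ Δ) ≤ x ⬝ᵥ (SigHat - Sig) *ᵥ x := by
    rw [← hxx]
    have := neg_abs_le (x ⬝ᵥ (SigHat - Sig) *ᵥ x)
    linarith
  have hq : x ⬝ᵥ SigHat *ᵥ x = x ⬝ᵥ Sig *ᵥ x + x ⬝ᵥ (SigHat - Sig) *ᵥ x := by
    rw [Matrix.sub_mulVec, dotProduct_sub]; ring
  -- from the compatibility of Sig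
  have hSigL : 16 * φ1 ^ 2 * a ^ 2 ≤ x ⬝ᵥ Sig *ᵥ x := by
    have h16 : (0:ℝ) < (4 * φ1) ^ 2 := by positivity
    have := (le_div_iff₀ h16).mp ha
    nlinarith [this]
  -- bound the perturbation term
  have ht1 : opNorm (SigHat - Sig) * finner Δ Δ ≤ (φ1 ^ 2 / (4 * r)) * ((1 + 18 * r) * a ^ 2) :=
    mul_le_mul hclose hfd hfd0 (by positivity)
  have ht2 : (φ1 ^ 2 / (4 * (r:ℝ))) * (1 + 18 * (r:ℝ)) ≤ 8 * φ1 ^ 2 := by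
    rw [div_mul_eq_mul_div, div_le_iff₀ (by positivity : (0:ℝ) < 4 * (r:ℝ))]
    nlinarith [sq_nonneg φ1]
  have ht3 : (φ1 ^ 2 / (4 * (r:ℝ))) * ((1 + 18 * r) * a ^ 2) ≤ 8 * φ1 ^ 2 * a ^ 2 := by
    have := mul_le_mul_of_nonneg_right ht2 (sq_nonneg a)
    calc (φ1 ^ 2 / (4 * (r:ℝ))) * ((1 + 18 * r) * a ^ 2)
        = (φ1 ^ 2 / (4 * (r:ℝ))) * (1 + 18 * (r:ℝ)) * a ^ 2 := by ring
      _ ≤ 8 * φ1 ^ 2 * a ^ 2 := this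
  -- conclude
  have hden : (4 * (φ1 / Real.sqrt 2)) ^ 2 = 8 * φ1 ^ 2 := by
    have h2 : Real.sqrt 2 ^ 2 = 2 := Real.sq_sqrt (by norm_num)
    rw [mul_pow, div_pow, h2]
    ring
  rw [hden, le_div_iff₀ (by positivity : (0:ℝ) < 8 * φ1 ^ 2)]
  have hfinal : 8 * φ1 ^ 2 * a ^ 2 ≤ x ⬝ᵥ SigHat *ᵥ x := by
    rw [hq]
    linarith
  calc a ^ 2 * (8 * φ1 ^ 2) = 8 * φ1 ^ 2 * a ^ 2 := by ring
    _ ≤ x ⬝ᵥ SigHat *ᵥ x := hfinal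
    _ = vecM Δ ⬝ᵥ SigHat.mulVec (vecM Δ) := rfl


end BanditPaper
end

section
/- Let B_1, ..., B_t be independent Bernoulli random variables with P(B_τ = 1) = min{1, t0/τ}/K, and set n_k = Σ_{τ=1}^t B_τ. Suppose C0 ≥ 10, t0 = 2 C0 K, and t ≥ (t0+1)²/e² − 1. Then with probability at least 1 − 2/(t+1), C0 (1 + log(t+1) − log(t0+1)) ≤ n_k ≤ 3 C0 (1 + log t − log t0). -/
open MeasureTheory ProbabilityTheory Finset Real

lemma log_succ_sub_log {b : ℕ} (hb : 1 ≤ b) :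
    (1 : ℝ) / (b + 1) ≤ Real.log (b + 1) - Real.log b ∧
      Real.log (b + 1) - Real.log b ≤ 1 / b := by
  have hb0 : (0:ℝ) < b := by exact_mod_cast hb
  have hb10 : (0:ℝ) < (b:ℝ) + 1 := by linarith
  constructor
  · have h := Real.log_le_sub_one_of_pos (x := (b:ℝ) / (b + 1)) (by positivity)
    rw [Real.log_div (ne_of_gt hb0) (ne_of_gt hb10)] at h
    have : (b:ℝ) / (b + 1) - 1 = -(1 / (b + 1)) := by field_simp; ring
    linarith [this ▸ h]
  · have h := Real.log_le_sub_one_of_pos (x := ((b:ℝ) + 1) / b) (by positivity)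
    rw [Real.log_div (ne_of_gt hb10) (ne_of_gt hb0)] at h
    have : ((b:ℝ) + 1) / b - 1 = 1 / b := by field_simp; ring
    linarith [this ▸ h]

lemma sum_inv_le_log {a : ℕ} (ha : 1 ≤ a) : ∀ b : ℕ, a ≤ b →
    (∑ τ ∈ Finset.Ioc a b, (1 : ℝ) / τ) ≤ Real.log b - Real.log a := by
  intro b hb
  induction b, hb using Nat.le_induction with
  | base => simp
  | succ b hab ih =>
    rw [Finset.sum_Ioc_succ_top hab]
    have h2 := (log_succ_sub_log (ha.trans hab)).1
    push_cast
    push_cast at ih h2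
    have : (1:ℝ)/((b:ℝ)+1) ≤ Real.log ((b:ℝ)+1) - Real.log b := h2
    linarith

lemma log_le_sum_inv {a : ℕ} (ha : 1 ≤ a) : ∀ b : ℕ, a ≤ b →
    Real.log (b + 1) - Real.log (a + 1) ≤ ∑ τ ∈ Finset.Ioc a b, (1 : ℝ) / τ := by
  intro b hb
  induction b, hb using Nat.le_induction with
  | base => simp
  | succ b hab ih =>
    rw [Finset.sum_Ioc_succ_top hab]
    have h2 := (log_succ_sub_log (Nat.le_succ_of_le (ha.trans hab))).2
    push_cast
    push_cast at ih h2
    linarith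

section Bern
variable {Ω : Type*} [MeasurableSpace Ω] (μ : Measure Ω) [IsProbabilityMeasure μ]
  (b : Ω → Bool)

lemma ind_eq_indicator :
    ((fun x : Bool => if x then (1:ℝ) else 0) ∘ b) =
      Set.indicator {ω | b ω = true} (fun _ => (1:ℝ)) := by
  funext ω
  by_cases h : b ω <;> simp [Set.indicator_apply, h]

lemma ind_integrable (hb : Measurable b) :
    Integrable ((fun x : Bool => if x then (1:ℝ) else 0) ∘ b) μ := by
  rw [ind_eq_indicator]
  exact (integrable_const (1:ℝ)).indicator (hb (measurableSet_singleton true))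

lemma ind_integral (hb : Measurable b) :
    ∫ ω, ((fun x : Bool => if x then (1:ℝ) else 0) ∘ b) ω ∂μ =
      (μ {ω | b ω = true}).toReal := by
  have hs : MeasurableSet {ω | b ω = true} := hb (measurableSet_singleton true)
  rw [ind_eq_indicator]
  rw [integral_indicator_const (1:ℝ) hs]
  simp
  rfl

lemma ind_exp_eq (c : ℝ) :
    (fun ω => Real.exp (c * ((fun x : Bool => if x then (1:ℝ) else 0) ∘ b) ω)) =
      fun ω => 1 + (Real.exp c - 1) * ((fun x : Bool => if x then (1:ℝ) else 0) ∘ b) ω := by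
  funext ω
  by_cases h : b ω <;> simp [h, Real.exp_zero]

lemma ind_exp_integrable (hb : Measurable b) (c : ℝ) :
    Integrable (fun ω => Real.exp (c * ((fun x : Bool => if x then (1:ℝ) else 0) ∘ b) ω)) μ := by
  rw [ind_exp_eq]
  exact (integrable_const 1).add ((ind_integrable μ b hb).const_mul _)

lemma ind_mgf (hb : Measurable b) (c : ℝ) :
    mgf ((fun x : Bool => if x then (1:ℝ) else 0) ∘ b) μ c =
      1 + (Real.exp c - 1) * (μ {ω | b ω = true}).toReal := by
  rw [mgf, ind_exp_eq]
  rw [integral_add (integrable_const 1) ((ind_integrable μ b hb).const_mul _)]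
  rw [integral_const_mul, ind_integral μ b hb]
  simp

end Bern
namespace BanditPaper

set_option maxHeartbeats 4000000 in
/-- upper and lower bounds on the number of forced samples of a given arm
under the ε-decay forced sampling method (Lemma D.1 / Proposition 2 of Wang et al.,
as restated in the paper). -/
theorem forced_sample_size_bounds
    {Ω : Type*} [mΩ : MeasurableSpace Ω] (μ : Measure Ω) [IsProbabilityMeasure μ]
    (K t t0 : ℕ) (C0 : ℝ) (hK : 2 ≤ K) (hC0 : 10 ≤ C0)
    (ht0 : (t0 : ℝ) = 2 * C0 * K)
    (ht : ((t0 : ℝ) + 1) ^ 2 / Real.exp 1 ^ 2 - 1 ≤ (t : ℝ))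
    (B : ℕ → Ω → Bool) (hBmeas : ∀ τ, Measurable (B τ))
    (hBindep : iIndepFun B μ)
    (hB : ∀ τ ∈ Finset.Icc 1 t,
      μ {ω | B τ ω = true} = ENNReal.ofReal (min 1 ((t0 : ℝ) / τ) / K)) :
    ENNReal.ofReal (1 - 2 / ((t : ℝ) + 1)) ≤
      μ {ω | C0 * (1 + Real.log ((t : ℝ) + 1) - Real.log ((t0 : ℝ) + 1)) ≤
            (∑ τ ∈ Finset.Icc 1 t, if B τ ω then (1 : ℝ) else 0) ∧
          (∑ τ ∈ Finset.Icc 1 t, if B τ ω then (1 : ℝ) else 0) ≤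
            3 * C0 * (1 + Real.log t - Real.log t0)} := by
  -- basic numerics
  have hK' : (2:ℝ) ≤ (K:ℝ) := by exact_mod_cast hK
  have hKpos : (0:ℝ) < K := by linarith
  have ht0' : (40:ℝ) ≤ (t0:ℝ) := by rw [ht0]; nlinarith
  have ht0n : 1 ≤ t0 := by exact_mod_cast (by linarith : (1:ℝ) ≤ (t0:ℝ))
  have he : Real.exp 1 < 2.7182818286 := Real.exp_one_lt_d9
  have he0 : (0:ℝ) < Real.exp 1 := Real.exp_pos 1
  have htt0R : (t0:ℝ) ≤ (t:ℝ) := by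
    have he2 : Real.exp 1 ^ 2 < 7.39 := by nlinarith
    have key : (t0:ℝ) + 1 ≤ ((t0:ℝ) + 1) ^ 2 / Real.exp 1 ^ 2 := by
      rw [le_div_iff₀ (by positivity)]
      nlinarith
    linarith
  have htt0 : t0 ≤ t := by exact_mod_cast htt0R
  have ht1 : (1:ℝ) ≤ (t:ℝ) := by linarith
  have ht0pos : (0:ℝ) < (t0:ℝ) := by linarith
  have htpos : (0:ℝ) < (t:ℝ) := by linarith
  -- key log inequality from the hypothesis on t
  have hsq : ((t0:ℝ) + 1) ^ 2 ≤ Real.exp 1 ^ 2 * ((t:ℝ) + 1) := by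
    have := (div_le_iff₀ (by positivity : (0:ℝ) < Real.exp 1 ^ 2)).mp (by linarith : ((t0:ℝ)+1)^2 / Real.exp 1 ^ 2 ≤ (t:ℝ) + 1)
    linarith
  have hlogkey : 2 * Real.log ((t0:ℝ) + 1) ≤ 2 + Real.log ((t:ℝ) + 1) := by
    have h1 : Real.log (((t0:ℝ) + 1) ^ 2) ≤ Real.log (Real.exp 1 ^ 2 * ((t:ℝ) + 1)) :=
      Real.log_le_log (by positivity) hsq
    rw [Real.log_pow, Real.log_mul (by positivity) (by positivity), Real.log_pow,
      Real.log_exp] at h1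
    push_cast at h1
    linarith
  -- log abbreviations
  set L : ℝ := Real.log ((t:ℝ) + 1) - Real.log ((t0:ℝ) + 1) with hLdef
  set U : ℝ := Real.log (t:ℝ) - Real.log (t0:ℝ) with hUdef
  clear_value L U
  have hL0 : 0 ≤ L := by
    have := Real.log_le_log (by positivity : (0:ℝ) < (t0:ℝ)+1) (by linarith : (t0:ℝ)+1 ≤ (t:ℝ)+1)
    simp only [hLdef]; linarith
  have hLU : L ≤ U := by
    have h1 : (t0:ℝ) * ((t:ℝ) + 1) ≤ (t:ℝ) * ((t0:ℝ) + 1) := by nlinarith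
    have h2 := Real.log_le_log (by positivity) h1
    rw [Real.log_mul (ne_of_gt ht0pos) (by positivity),
      Real.log_mul (ne_of_gt htpos) (by positivity)] at h2
    simp only [hLdef, hUdef]; linarith
  have hlogt1 : 0 ≤ Real.log ((t:ℝ) + 1) := Real.log_nonneg (by linarith)
  -- the random variables
  set X : ℕ → Ω → ℝ := fun τ => (fun x : Bool => if x then (1:ℝ) else 0) ∘ B τ with hXdef
  have hXmeas : ∀ τ, Measurable (X τ) := fun τ => Measurable.of_discrete.comp (hBmeas τ)
  have hXindep : iIndepFun X μ :=
    hBindep.comp _ (fun _ => Measurable.of_discrete)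
  set S : Ω → ℝ := ∑ τ ∈ Finset.Icc 1 t, X τ with hSdef
  have hSapp : ∀ ω, S ω = ∑ τ ∈ Finset.Icc 1 t, if B τ ω then (1:ℝ) else 0 := by
    intro ω; simp [hSdef, Finset.sum_apply, hXdef]
  have hSmeas : Measurable S := by
    have hS2 : S = fun ω => ∑ τ ∈ Finset.Icc 1 t, X τ ω := by
      funext ω; simp only [hSdef, Finset.sum_apply]
    rw [hS2]; exact Finset.measurable_sum _ (fun τ _ => hXmeas τ)
  -- success probabilities
  set p : ℕ → ℝ := fun τ => min 1 ((t0:ℝ) / τ) / K with hpdef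
  have hp0 : ∀ τ, 0 ≤ p τ := by
    intro τ
    have : (0:ℝ) ≤ min 1 ((t0:ℝ)/τ) := le_min (by norm_num) (by positivity)
    positivity
  have hp1 : ∀ τ, p τ ≤ 1 := by
    intro τ
    have h1 : min 1 ((t0:ℝ)/τ) ≤ 1 := min_le_left _ _
    rw [hpdef, div_le_one hKpos]
    linarith
  have hptoReal : ∀ τ ∈ Finset.Icc 1 t, (μ {ω | B τ ω = true}).toReal = p τ := by
    intro τ hτ
    rw [hB τ hτ, ENNReal.toReal_ofReal (hp0 τ)]
  -- the mean
  set m : ℝ := ∑ τ ∈ Finset.Icc 1 t, p τ with hmdef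
  clear_value m
  have ht0K : (t0:ℝ) / K = 2 * C0 := by
    rw [ht0]; field_simp
  have hm_eq : m = 2 * C0 * (1 + ∑ τ ∈ Finset.Ioc t0 t, (1:ℝ)/τ) := by
    have hsplit : Finset.Icc 1 t = Finset.Ioc 0 t0 ∪ Finset.Ioc t0 t := by
      ext x
      simp only [Finset.mem_Icc, Finset.mem_union, Finset.mem_Ioc]
      omega
    have hdisj : Disjoint (Finset.Ioc 0 t0) (Finset.Ioc t0 t) := by
      rw [Finset.disjoint_left]
      intro x hx hx'
      simp only [Finset.mem_Ioc] at hx hx'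
      omega
    rw [hmdef, hsplit, Finset.sum_union hdisj]
    have h1 : ∑ τ ∈ Finset.Ioc 0 t0, p τ = (t0:ℝ) / K := by
      rw [Finset.sum_congr rfl (g := fun _ => 1 / (K:ℝ)) ?_]
      · rw [Finset.sum_const, Nat.card_Ioc, Nat.sub_zero, nsmul_eq_mul]
        field_simp
      · intro τ hτ
        simp only [Finset.mem_Ioc] at hτ
        have hτpos : (0:ℝ) < (τ:ℝ) := by exact_mod_cast hτ.1
        have hτt0 : (τ:ℝ) ≤ (t0:ℝ) := by exact_mod_cast hτ.2
        have : (1:ℝ) ≤ (t0:ℝ)/τ := by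
          rw [le_div_iff₀ hτpos]; linarith
        simp [hpdef, min_eq_left this]
    have h2 : ∑ τ ∈ Finset.Ioc t0 t, p τ = ((t0:ℝ)/K) * ∑ τ ∈ Finset.Ioc t0 t, (1:ℝ)/τ := by
      rw [Finset.mul_sum]
      refine Finset.sum_congr rfl ?_
      intro τ hτ
      simp only [Finset.mem_Ioc] at hτ
      have hτpos : (0:ℝ) < (τ:ℝ) := by
        have : 0 < τ := lt_of_le_of_lt (Nat.zero_le t0) hτ.1
        exact_mod_cast this
      have hle : (t0:ℝ)/τ ≤ 1 := by
        rw [div_le_one hτpos]; exact_mod_cast le_of_lt hτ.1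
      simp only [hpdef, min_eq_right hle]
      field_simp
    rw [h1, h2, ht0K]
    ring
  have hH_lb := log_le_sum_inv ht0n t htt0
  have hH_ub := sum_inv_le_log ht0n t htt0
  have hm_lb : 2 * C0 * (1 + L) ≤ m := by
    rw [hm_eq]
    have : L ≤ ∑ τ ∈ Finset.Ioc t0 t, (1:ℝ)/τ := by
      simp only [hLdef]; push_cast at hH_lb ⊢; linarith
    nlinarith
  have hm_ub : m ≤ 2 * C0 * (1 + U) := by
    rw [hm_eq]
    have : (∑ τ ∈ Finset.Ioc t0 t, (1:ℝ)/τ) ≤ U := by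
      simp only [hUdef]; push_cast at hH_ub ⊢; linarith
    nlinarith
  -- mgf bound for the sum
  have hSmgf : ∀ c : ℝ, mgf S μ c ≤ Real.exp ((Real.exp c - 1) * m) := by
    intro c
    rw [hSdef, hXindep.mgf_sum hXmeas]
    have hfac : ∀ τ ∈ Finset.Icc 1 t, mgf (X τ) μ c = 1 + (Real.exp c - 1) * p τ := by
      intro τ hτ
      rw [hXdef]
      rw [ind_mgf μ (B τ) (hBmeas τ) c, hptoReal τ hτ]
    calc ∏ τ ∈ Finset.Icc 1 t, mgf (X τ) μ c
        = ∏ τ ∈ Finset.Icc 1 t, (1 + (Real.exp c - 1) * p τ) :=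
          Finset.prod_congr rfl hfac
      _ ≤ ∏ τ ∈ Finset.Icc 1 t, Real.exp ((Real.exp c - 1) * p τ) := by
          refine Finset.prod_le_prod ?_ ?_
          · intro τ _
            nlinarith [Real.exp_pos c, hp0 τ, hp1 τ]
          · intro τ _
            linarith [Real.add_one_le_exp ((Real.exp c - 1) * p τ)]
      _ = Real.exp ((Real.exp c - 1) * m) := by
          rw [← Real.exp_sum, hmdef, Finset.mul_sum]
  have hSint : ∀ c : ℝ, Integrable (fun ω => Real.exp (c * S ω)) μ := by
    intro c
    rw [hSdef]
    exact hXindep.integrable_exp_mul_sum hXmeas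
      (fun τ _ => ind_exp_integrable μ (B τ) (hBmeas τ) c)
  -- tail bounds
  set aL : ℝ := C0 * (1 + L) with haLdef
  set aU : ℝ := 3 * C0 * (1 + U) with haUdef
  clear_value aL aU
  -- lower tail
  have hlog2 : Real.log 2 < 0.6931471808 := Real.log_two_lt_d9
  have hlog2' : 0 < Real.log 2 := Real.log_pos (by norm_num)
  have hlow : (μ {ω | S ω ≤ aL}).toReal ≤ 1 / ((t:ℝ) + 1) := by
    have hc : -(Real.log 2) ≤ 0 := by linarith
    have h1 := measure_le_le_exp_mul_mgf (X := S) (μ := μ) aL hc (hSint _)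
    have hexp2 : Real.exp (-(Real.log 2)) = 1/2 := by
      rw [Real.exp_neg, Real.exp_log (by norm_num : (0:ℝ) < 2)]; norm_num
    have h2 : mgf S μ (-(Real.log 2)) ≤ Real.exp (-(m/2)) := by
      refine (hSmgf _).trans ?_
      rw [hexp2]
      apply Real.exp_le_exp.mpr
      nlinarith [hm_lb, hC0, hL0]
    have h3 : (μ {ω | S ω ≤ aL}).toReal ≤ Real.exp (Real.log 2 * aL - m/2) := by
      calc (μ {ω | S ω ≤ aL}).toReal
          ≤ Real.exp (-(-(Real.log 2)) * aL) * mgf S μ (-(Real.log 2)) := h1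
        _ ≤ Real.exp (Real.log 2 * aL) * Real.exp (-(m/2)) := by
            rw [neg_neg]
            exact mul_le_mul_of_nonneg_left h2 (le_of_lt (Real.exp_pos _))
        _ = Real.exp (Real.log 2 * aL - m/2) := by rw [← Real.exp_add]; ring_nf
    refine h3.trans ?_
    have h4 : Real.log 2 * aL - m/2 ≤ -Real.log ((t:ℝ)+1) := by
      have e1 : Real.log 2 * aL - m/2 ≤ C0 * (1+L) * (Real.log 2 - 1) := by
        rw [haLdef]; nlinarith [hm_lb]
      have e2 : C0 * (1+L) * (Real.log 2 - 1) ≤ -(3 * (1+L)) := by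
        have h1pL : (0:ℝ) ≤ 1 + L := by linarith
        have ha : Real.log 2 - 1 ≤ -(3/10) := by linarith [hlog2]
        have hb : 0 ≤ C0 * (1+L) := mul_nonneg (by linarith) h1pL
        have hc' : C0 * (1+L) * (Real.log 2 - 1) ≤ C0 * (1+L) * (-(3/10)) :=
          mul_le_mul_of_nonneg_left ha hb
        have hd : 10 * (1+L) ≤ C0 * (1+L) := mul_le_mul_of_nonneg_right hC0 h1pL
        linarith
      have e3 : -(3 * (1+L)) ≤ -Real.log ((t:ℝ)+1) := by
        simp only [hLdef]; linarith [hlogkey, hlogt1]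
      linarith
    calc Real.exp (Real.log 2 * aL - m/2) ≤ Real.exp (-Real.log ((t:ℝ)+1)) :=
          Real.exp_le_exp.mpr h4
      _ = 1 / ((t:ℝ)+1) := by
          rw [Real.exp_neg, Real.exp_log (by positivity)]; norm_num
  -- upper tail
  have hlog32 : (2:ℝ)/5 ≤ Real.log (3/2) := by
    rw [Real.le_log_iff_exp_le (by norm_num : (0:ℝ) < 3/2)]
    have hexp2lt : Real.exp 2 ≤ 7.39 := by
      have h21 : Real.exp 2 = Real.exp 1 ^ 2 := by
        rw [← Real.exp_nat_mul]; norm_num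
      rw [h21]; nlinarith
    have h5 : Real.exp (2/5) ^ 5 ≤ (3/2 : ℝ) ^ 5 := by
      rw [← Real.exp_nat_mul]
      have h55 : ((5:ℕ):ℝ) * (2/5 : ℝ) = 2 := by norm_num
      rw [h55]
      nlinarith [hexp2lt]
    exact le_of_pow_le_pow_left₀ (by norm_num) (by norm_num) h5
  have hhigh : (μ {ω | aU ≤ S ω}).toReal ≤ 1 / ((t:ℝ) + 1) := by
    have hc : (0:ℝ) ≤ Real.log (3/2) := by linarith
    have h1 := measure_ge_le_exp_mul_mgf (X := S) (μ := μ) aU hc (hSint _)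
    have hexp32 : Real.exp (Real.log (3/2 : ℝ)) = 3/2 := Real.exp_log (by norm_num)
    have h2 : mgf S μ (Real.log (3/2)) ≤ Real.exp (m/2) := by
      refine (hSmgf _).trans ?_
      rw [hexp32]
      apply Real.exp_le_exp.mpr
      linarith
    have h3 : (μ {ω | aU ≤ S ω}).toReal ≤ Real.exp (-(Real.log (3/2)) * aU + m/2) := by
      calc (μ {ω | aU ≤ S ω}).toReal
          ≤ Real.exp (-(Real.log (3/2)) * aU) * mgf S μ (Real.log (3/2)) := h1
        _ ≤ Real.exp (-(Real.log (3/2)) * aU) * Real.exp (m/2) :=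
            mul_le_mul_of_nonneg_left h2 (le_of_lt (Real.exp_pos _))
        _ = Real.exp (-(Real.log (3/2)) * aU + m/2) := by rw [← Real.exp_add]
    refine h3.trans ?_
    have h4 : -(Real.log (3/2)) * aU + m/2 ≤ -Real.log ((t:ℝ)+1) := by
      have hU0 : 0 ≤ U := le_trans hL0 hLU
      have e1 : -(Real.log (3/2)) * aU + m/2 ≤ C0 * (1+U) * (1 - 3 * Real.log (3/2)) := by
        rw [haUdef]; nlinarith [hm_ub]
      have e2 : C0 * (1+U) * (1 - 3 * Real.log (3/2)) ≤ -(2 * (1+U)) := by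
        have h1pU : (0:ℝ) ≤ 1 + U := by linarith
        have ha : 1 - 3 * Real.log (3/2) ≤ -(1/5) := by linarith [hlog32]
        have hb : 0 ≤ C0 * (1+U) := mul_nonneg (by linarith) h1pU
        have hc' : C0 * (1+U) * (1 - 3 * Real.log (3/2)) ≤ C0 * (1+U) * (-(1/5)) :=
          mul_le_mul_of_nonneg_left ha hb
        have hd : 10 * (1+U) ≤ C0 * (1+U) := mul_le_mul_of_nonneg_right hC0 h1pU
        linarith
      have e3 : -(2 * (1+U)) ≤ -(2 * (1+L)) := by linarith
      have e4 : -(2 * (1+L)) ≤ -Real.log ((t:ℝ)+1) := by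
        simp only [hLdef]; linarith [hlogkey]
      linarith
    calc Real.exp (-(Real.log (3/2)) * aU + m/2) ≤ Real.exp (-Real.log ((t:ℝ)+1)) :=
          Real.exp_le_exp.mpr h4
      _ = 1 / ((t:ℝ)+1) := by
          rw [Real.exp_neg, Real.exp_log (by positivity)]; norm_num
  -- assemble
  have hA : MeasurableSet {ω | aL ≤ S ω ∧ S ω ≤ aU} := by
    have : {ω | aL ≤ S ω ∧ S ω ≤ aU} = {ω | aL ≤ S ω} ∩ {ω | S ω ≤ aU} := rfl
    rw [this]
    exact (measurableSet_le measurable_const hSmeas).inter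
      (measurableSet_le hSmeas measurable_const)
  have hsub : {ω | aL ≤ S ω ∧ S ω ≤ aU}ᶜ ⊆ {ω | S ω ≤ aL} ∪ {ω | aU ≤ S ω} := by
    intro ω hω
    simp only [Set.mem_compl_iff, Set.mem_setOf_eq, not_and_or, not_le] at hω
    rcases hω with h | h
    · exact Or.inl (le_of_lt h)
    · exact Or.inr (le_of_lt h)
  have htail1 : μ {ω | S ω ≤ aL} ≤ ENNReal.ofReal (1/((t:ℝ)+1)) :=
    (ENNReal.le_ofReal_iff_toReal_le (measure_ne_top μ _) (by positivity)).mpr hlow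
  have htail2 : μ {ω | aU ≤ S ω} ≤ ENNReal.ofReal (1/((t:ℝ)+1)) :=
    (ENNReal.le_ofReal_iff_toReal_le (measure_ne_top μ _) (by positivity)).mpr hhigh
  have hcompl : μ {ω | aL ≤ S ω ∧ S ω ≤ aU}ᶜ ≤ ENNReal.ofReal (2/((t:ℝ)+1)) := by
    calc μ {ω | aL ≤ S ω ∧ S ω ≤ aU}ᶜ
        ≤ μ ({ω | S ω ≤ aL} ∪ {ω | aU ≤ S ω}) := measure_mono hsub
      _ ≤ μ {ω | S ω ≤ aL} + μ {ω | aU ≤ S ω} := measure_union_le _ _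
      _ ≤ ENNReal.ofReal (1/((t:ℝ)+1)) + ENNReal.ofReal (1/((t:ℝ)+1)) :=
          add_le_add htail1 htail2
      _ = ENNReal.ofReal (2/((t:ℝ)+1)) := by
          rw [← ENNReal.ofReal_add (by positivity) (by positivity)]
          norm_num
          ring_nf
  have hgoalset : {ω | C0 * (1 + Real.log ((t:ℝ) + 1) - Real.log ((t0:ℝ) + 1)) ≤
            (∑ τ ∈ Finset.Icc 1 t, if B τ ω then (1 : ℝ) else 0) ∧
          (∑ τ ∈ Finset.Icc 1 t, if B τ ω then (1 : ℝ) else 0) ≤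
            3 * C0 * (1 + Real.log t - Real.log t0)} = {ω | aL ≤ S ω ∧ S ω ≤ aU} := by
    ext ω
    simp only [Set.mem_setOf_eq, hSapp, haLdef, haUdef, hLdef, hUdef]
    constructor
    · rintro ⟨h1, h2⟩; exact ⟨by linarith [h1], by linarith [h2]⟩
    · rintro ⟨h1, h2⟩; exact ⟨by linarith [h1], by linarith [h2]⟩
  rw [hgoalset]
  calc ENNReal.ofReal (1 - 2/((t:ℝ)+1))
      = 1 - ENNReal.ofReal (2/((t:ℝ)+1)) := by
        rw [ENNReal.ofReal_sub _ (by positivity), ENNReal.ofReal_one]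
    _ ≤ 1 - μ {ω | aL ≤ S ω ∧ S ω ≤ aU}ᶜ := tsub_le_tsub_left hcompl 1
    _ = μ {ω | aL ≤ S ω ∧ S ω ≤ aU} := by
        rw [prob_compl_eq_one_sub hA]
        rw [ENNReal.sub_sub_cancel ENNReal.one_ne_top prob_le_one]

end BanditPaper
end

section
/- Consider the ε-decay forced-sampling model for arm k: n_k = Σ_{τ=1}^{t_l} B_τ, where B_1, ..., B_{t_l} are independent Bernoulli variables with P(B_τ = 1) = min{1, t0/τ}/K; the covariates attached to the n_k forced samples are i.i.d. from a distribution P_X, and V is a region with P_X(X ∈ V) ≥ p*; let |A'| denote the number of the n_k forced samples whose covariate lies in V. Suppose t0 = 2 C0 K with C0 = max{10, 8/p*}, and t_l ≥ (t0+1)²/e² − 1. Then: (1) P( n_k < C0 log(t_l+1)/2 or n_k > 6 C0 log(t_l+1) ) ≤ 2/(t_l+1); (2) P( |A'| < p* C0 log(t_l+1)/2 ) ≤ 1/(t_l+1); (3) P( |A'|/n_k < p*/12 ) ≤ 3/(t_l+1). -/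
open MeasureTheory ProbabilityTheory Finset Real

namespace BanditPaper

private lemma log_sub_le_sum_inv (a : ℕ) : ∀ b : ℕ,
    Real.log ((b : ℝ) + 1) - Real.log ((a : ℝ) + 1) ≤ ∑ τ ∈ Finset.Ioc a b, ((τ : ℝ))⁻¹ := by
  intro b
  induction b with
  | zero =>
    simp only [Nat.cast_zero, zero_add, Real.log_one, Finset.Ioc_self]
    simp [Real.log_nonneg (by push_cast; linarith [Nat.cast_nonneg (α := ℝ) a] : (1:ℝ) ≤ (a:ℝ)+1)]
  | succ b ih =>
    rcases le_or_gt a b with hab | hab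
    · rw [Finset.sum_Ioc_succ_top hab]
      have hb1 : (0:ℝ) < (b:ℝ) + 1 := by positivity
      have key : Real.log ((b:ℝ) + 1 + 1) - Real.log ((b:ℝ) + 1) ≤ ((b:ℝ)+1)⁻¹ := by
        have h := Real.log_le_sub_one_of_pos (x := ((b:ℝ)+2)/((b:ℝ)+1)) (by positivity)
        rw [Real.log_div (by positivity) (by positivity)] at h
        have h2 : ((b:ℝ)+2)/((b:ℝ)+1) - 1 = ((b:ℝ)+1)⁻¹ := by field_simp; norm_num
        rw [h2] at h
        have : ((b:ℝ) + 1 + 1) = ((b:ℝ) + 2) := by ring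
        rw [this]
        linarith
      push_cast
      push_cast at ih
      linarith
    · have hempty : Finset.Ioc a (b+1) = ∅ := Finset.Ioc_eq_empty (by omega)
      rw [hempty, Finset.sum_empty]
      have hle : Real.log ((b:ℝ)+1+1) ≤ Real.log ((a:ℝ)+1) := by
        apply Real.log_le_log (by positivity)
        have : (b:ℝ) + 1 ≤ (a:ℝ) := by exact_mod_cast hab
        linarith
      push_cast
      linarith

private lemma sum_inv_le_log_sub (a : ℕ) (ha : 1 ≤ a) :
    ∀ b : ℕ, a ≤ b →
    ∑ τ ∈ Finset.Ioc a b, ((τ : ℝ))⁻¹ ≤ Real.log b - Real.log a := by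
  intro b hb
  induction b, hb using Nat.le_induction with
  | base => simp
  | succ b hab ih =>
    rw [Finset.sum_Ioc_succ_top hab]
    have hb1 : (1:ℝ) ≤ (b:ℝ) := by exact_mod_cast le_trans ha hab
    have key : ((b:ℝ)+1)⁻¹ ≤ Real.log ((b:ℝ)+1) - Real.log b := by
      have h := Real.log_le_sub_one_of_pos (x := (b:ℝ)/((b:ℝ)+1)) (by positivity)
      rw [Real.log_div (by positivity) (by positivity)] at h
      have h2 : (b:ℝ)/((b:ℝ)+1) - 1 = -((b:ℝ)+1)⁻¹ := by field_simp; ring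
      rw [h2] at h
      linarith
    push_cast
    push_cast at ih
    linarith

private lemma mgf_indicator {Ω : Type*} [MeasurableSpace Ω] (μ : Measure Ω) [IsProbabilityMeasure μ]
    {A : Set Ω} (hA : MeasurableSet A) (t : ℝ) :
    mgf (A.indicator fun _ => (1:ℝ)) μ t = 1 + (μ A).toReal * (Real.exp t - 1) := by
  have hfun : (fun ω => Real.exp (t * A.indicator (fun _ => (1:ℝ)) ω))
      = fun ω => A.indicator (fun _ => Real.exp t - 1) ω + 1 := by
    funext ω
    by_cases h : ω ∈ A
    · simp [Set.indicator_of_mem h]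
    · simp [Set.indicator_of_notMem h]
  unfold mgf
  rw [hfun, integral_add ((integrable_const _).indicator hA) (integrable_const 1),
    integral_indicator_const _ hA, integral_const, probReal_univ, measureReal_def]
  simp [smul_eq_mul]
  ring

private lemma integrable_exp_bdd {Ω : Type*} [MeasurableSpace Ω] (μ : Measure Ω) [IsFiniteMeasure μ]
    {f : Ω → ℝ} (hf : Measurable f) {c : ℝ} (hb : ∀ ω, f ω ≤ c) :
    Integrable (fun ω => Real.exp (f ω)) μ := by
  refine ⟨hf.exp.aestronglyMeasurable,
    HasFiniteIntegral.of_bounded (C := Real.exp c) (ae_of_all _ fun ω => ?_)⟩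
  rw [Real.norm_eq_abs, abs_of_pos (Real.exp_pos _)]
  exact Real.exp_le_exp.2 (hb ω)

private lemma mgf_sum_indicator_le {Ω : Type*} [MeasurableSpace Ω] {μ : Measure Ω}
    [IsProbabilityMeasure μ]
    (A : ℕ → Set Ω) (hA : ∀ τ, MeasurableSet (A τ))
    (hind : iIndepFun (fun τ => (A τ).indicator fun _ => (1:ℝ)) μ)
    (s : Finset ℕ) (t : ℝ) :
    mgf (∑ τ ∈ s, (A τ).indicator fun _ => (1:ℝ)) μ t
      ≤ Real.exp ((Real.exp t - 1) * ∑ τ ∈ s, (μ (A τ)).toReal) := by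
  rw [hind.mgf_sum (fun τ => measurable_const.indicator (hA τ)) s]
  have hp0 : ∀ τ, 0 ≤ (μ (A τ)).toReal := fun τ => ENNReal.toReal_nonneg
  have hp1 : ∀ τ, (μ (A τ)).toReal ≤ 1 := fun τ => by
    have := prob_le_one (μ := μ) (s := A τ)
    have h := ENNReal.toReal_mono (by norm_num) this
    simpa using h
  calc ∏ τ ∈ s, mgf ((A τ).indicator fun _ => (1:ℝ)) μ t
      ≤ ∏ τ ∈ s, Real.exp ((μ (A τ)).toReal * (Real.exp t - 1)) := by
        apply Finset.prod_le_prod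
        · intro τ _
          rw [mgf_indicator μ (hA τ) t]
          nlinarith [Real.exp_pos t, hp0 τ, hp1 τ]
        · intro τ _
          rw [mgf_indicator μ (hA τ) t]
          linarith [Real.add_one_le_exp ((μ (A τ)).toReal * (Real.exp t - 1))]
    _ = Real.exp (∑ τ ∈ s, (μ (A τ)).toReal * (Real.exp t - 1)) := (Real.exp_sum s _).symm
    _ = _ := by rw [← Finset.sum_mul]; ring_nf


private lemma sum_indicator_nonneg {Ω : Type*} (A : ℕ → Set Ω) (s : Finset ℕ) (ω : Ω) :
    0 ≤ ∑ τ ∈ s, (A τ).indicator (fun _ => (1:ℝ)) ω :=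
  Finset.sum_nonneg fun τ _ => Set.indicator_nonneg (fun _ _ => zero_le_one) ω

private lemma sum_indicator_le_card {Ω : Type*} (A : ℕ → Set Ω) (s : Finset ℕ) (ω : Ω) :
    ∑ τ ∈ s, (A τ).indicator (fun _ => (1:ℝ)) ω ≤ s.card := by
  have h := Finset.sum_le_card_nsmul s (fun τ => (A τ).indicator (fun _ => (1:ℝ)) ω) 1
    (fun τ _ => by
      classical
      by_cases h : ω ∈ A τ <;> simp [Set.indicator_of_mem, Set.indicator_of_notMem, h])
  simpa [nsmul_eq_mul] using h

private lemma meas_sum_indicator {Ω : Type*} [MeasurableSpace Ω]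
    (A : ℕ → Set Ω) (hA : ∀ τ, MeasurableSet (A τ)) (s : Finset ℕ) :
    Measurable (∑ τ ∈ s, (A τ).indicator fun _ => (1:ℝ)) := by
  have : Measurable (fun ω => ∑ τ ∈ s, (A τ).indicator (fun _ => (1:ℝ)) ω) :=
    Finset.measurable_sum s (fun τ _ => measurable_const.indicator (hA τ))
  have heq : (∑ τ ∈ s, (A τ).indicator fun _ => (1:ℝ))
      = fun ω => ∑ τ ∈ s, (A τ).indicator (fun _ => (1:ℝ)) ω := by
    funext ω; simp [Finset.sum_apply]
  rw [heq]; exact this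

private lemma chernoff_lower {Ω : Type*} [MeasurableSpace Ω] {μ : Measure Ω}
    [IsProbabilityMeasure μ]
    (A : ℕ → Set Ω) (hA : ∀ τ, MeasurableSet (A τ))
    (hind : iIndepFun (fun τ => (A τ).indicator fun _ => (1:ℝ)) μ)
    (s : Finset ℕ) (ε : ℝ) :
    μ {ω | (∑ τ ∈ s, (A τ).indicator (fun _ => (1:ℝ)) ω) ≤ ε}
      ≤ ENNReal.ofReal
          (Real.exp (ε + (Real.exp (-1) - 1) * ∑ τ ∈ s, (μ (A τ)).toReal)) := by
  have hint : Integrable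
      (fun ω => Real.exp ((-1) * (∑ τ ∈ s, (A τ).indicator fun _ => (1:ℝ)) ω)) μ := by
    apply integrable_exp_bdd μ ((meas_sum_indicator A hA s).const_mul (-1)) (c := 0)
    intro ω
    simp only [Finset.sum_apply]
    nlinarith [sum_indicator_nonneg A s ω]
  have h1 := measure_le_le_exp_mul_mgf (μ := μ)
    (X := ∑ τ ∈ s, (A τ).indicator fun _ => (1:ℝ)) ε (by norm_num : (-1:ℝ) ≤ 0) hint
  have h2 := mgf_sum_indicator_le A hA hind s (-1)
  have h3 : (μ {ω | (∑ τ ∈ s, (A τ).indicator fun _ => (1:ℝ)) ω ≤ ε}).toReal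
      ≤ Real.exp (ε + (Real.exp (-1) - 1) * ∑ τ ∈ s, (μ (A τ)).toReal) := by
    calc (μ {ω | (∑ τ ∈ s, (A τ).indicator fun _ => (1:ℝ)) ω ≤ ε}).toReal
        ≤ Real.exp (-(-1) * ε) * mgf (∑ τ ∈ s, (A τ).indicator fun _ => (1:ℝ)) μ (-1) := h1
      _ ≤ Real.exp (ε) * Real.exp ((Real.exp (-1) - 1) * ∑ τ ∈ s, (μ (A τ)).toReal) := by
          rw [show -(-1:ℝ) * ε = ε by ring]
          exact mul_le_mul_of_nonneg_left h2 (Real.exp_nonneg _)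
      _ = Real.exp (ε + (Real.exp (-1) - 1) * ∑ τ ∈ s, (μ (A τ)).toReal) :=
          (Real.exp_add _ _).symm
  rw [ENNReal.le_ofReal_iff_toReal_le (measure_ne_top μ _) (Real.exp_nonneg _)]
  simpa [Finset.sum_apply] using h3

private lemma chernoff_upper {Ω : Type*} [MeasurableSpace Ω] {μ : Measure Ω}
    [IsProbabilityMeasure μ]
    (A : ℕ → Set Ω) (hA : ∀ τ, MeasurableSet (A τ))
    (hind : iIndepFun (fun τ => (A τ).indicator fun _ => (1:ℝ)) μ)
    (s : Finset ℕ) (ε : ℝ) :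
    μ {ω | ε ≤ (∑ τ ∈ s, (A τ).indicator (fun _ => (1:ℝ)) ω)}
      ≤ ENNReal.ofReal
          (Real.exp (-ε + (Real.exp 1 - 1) * ∑ τ ∈ s, (μ (A τ)).toReal)) := by
  have hint : Integrable
      (fun ω => Real.exp ((1:ℝ) * (∑ τ ∈ s, (A τ).indicator fun _ => (1:ℝ)) ω)) μ := by
    apply integrable_exp_bdd μ ((meas_sum_indicator A hA s).const_mul 1) (c := s.card)
    intro ω
    simp only [Finset.sum_apply, one_mul]
    exact sum_indicator_le_card A s ω
  have h1 := measure_ge_le_exp_mul_mgf (μ := μ)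
    (X := ∑ τ ∈ s, (A τ).indicator fun _ => (1:ℝ)) ε (by norm_num : (0:ℝ) ≤ 1) hint
  have h2 := mgf_sum_indicator_le A hA hind s 1
  have h3 : (μ {ω | ε ≤ (∑ τ ∈ s, (A τ).indicator fun _ => (1:ℝ)) ω}).toReal
      ≤ Real.exp (-ε + (Real.exp 1 - 1) * ∑ τ ∈ s, (μ (A τ)).toReal) := by
    calc (μ {ω | ε ≤ (∑ τ ∈ s, (A τ).indicator fun _ => (1:ℝ)) ω}).toReal
        ≤ Real.exp (-1 * ε) * mgf (∑ τ ∈ s, (A τ).indicator fun _ => (1:ℝ)) μ 1 := h1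
      _ ≤ Real.exp (-ε) * Real.exp ((Real.exp 1 - 1) * ∑ τ ∈ s, (μ (A τ)).toReal) := by
          rw [show (-1:ℝ) * ε = -ε by ring]
          exact mul_le_mul_of_nonneg_left h2 (Real.exp_nonneg _)
      _ = Real.exp (-ε + (Real.exp 1 - 1) * ∑ τ ∈ s, (μ (A τ)).toReal) :=
          (Real.exp_add _ _).symm
  rw [ENNReal.le_ofReal_iff_toReal_le (measure_ne_top μ _) (Real.exp_nonneg _)]
  simpa [Finset.sum_apply] using h3

set_option maxHeartbeats 4000000 in
/-- bounds on the forced-sample size `n_k` and on the number `|A'|` of forced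
samples whose covariate falls in the region `V`
(Lemma D.2 / Lemma EC.8 of Wang et al., as restated in the paper). -/
theorem forced_sample_region_bounds
    {Ω E : Type*} [mΩ : MeasurableSpace Ω] [MeasurableSpace E]
    (μ : Measure Ω) [IsProbabilityMeasure μ]
    (K tl t0 : ℕ) (C0 pstar : ℝ) (hK : 2 ≤ K)
    (hpstar : pstar ∈ Set.Ioc (0 : ℝ) 1)
    (hC0 : C0 = max 10 (8 / pstar))
    (ht0 : (t0 : ℝ) = 2 * C0 * K)
    (htl : ((t0 : ℝ) + 1) ^ 2 / Real.exp 1 ^ 2 - 1 ≤ (tl : ℝ))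
    -- forced-sampling indicators for arm `k`
    (B : ℕ → Ω → Bool) (hBmeas : ∀ τ, Measurable (B τ))
    (hB : ∀ τ ∈ Finset.Icc 1 tl,
      μ {ω | B τ ω = true} = ENNReal.ofReal (min 1 ((t0 : ℝ) / τ) / K))
    -- i.i.d. covariates, independent of the forced-sampling indicators
    (X : ℕ → Ω → E) (hXmeas : ∀ τ, Measurable (X τ))
    (PX : Measure E) [IsProbabilityMeasure PX]
    (hXlaw : ∀ τ, Measure.map (X τ) μ = PX)
    (hindep : iIndepFun (fun τ ω => (B τ ω, X τ ω)) μ)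
    (hBX : ∀ τ, IndepFun (B τ) (X τ) μ)
    -- the region `V`
    (V : Set E) (hV : MeasurableSet V) (hpV : ENNReal.ofReal pstar ≤ PX V) :
    (μ {ω | (∑ τ ∈ Finset.Icc 1 tl, if B τ ω then (1 : ℝ) else 0) <
            C0 * Real.log ((tl : ℝ) + 1) / 2 ∨
          3 * (2 * C0) * Real.log ((tl : ℝ) + 1) <
            (∑ τ ∈ Finset.Icc 1 tl, if B τ ω then (1 : ℝ) else 0)} ≤
        ENNReal.ofReal (2 / ((tl : ℝ) + 1))) ∧
    (μ {ω | (∑ τ ∈ Finset.Icc 1 tl,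
            Set.indicator {ω' | B τ ω' = true ∧ X τ ω' ∈ V} (fun _ => (1 : ℝ)) ω) <
          pstar * C0 * Real.log ((tl : ℝ) + 1) / 2} ≤
        ENNReal.ofReal (1 / ((tl : ℝ) + 1))) ∧
    (μ {ω | (∑ τ ∈ Finset.Icc 1 tl,
            Set.indicator {ω' | B τ ω' = true ∧ X τ ω' ∈ V} (fun _ => (1 : ℝ)) ω) /
          (∑ τ ∈ Finset.Icc 1 tl, if B τ ω then (1 : ℝ) else 0) < pstar / 12} ≤
        ENNReal.ofReal (3 / ((tl : ℝ) + 1))) := by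
  classical
  obtain ⟨hp0, hp1⟩ := hpstar
  set L := Real.log ((tl : ℝ) + 1) with hL
  have hC0_10 : (10:ℝ) ≤ C0 := by rw [hC0]; exact le_max_left _ _
  have hpC0 : (8:ℝ) ≤ pstar * C0 := by
    rw [hC0]
    have h8 : pstar * (8 / pstar) = 8 := by field_simp
    calc (8:ℝ) = pstar * (8/pstar) := h8.symm
      _ ≤ pstar * max 10 (8/pstar) := mul_le_mul_of_nonneg_left (le_max_right _ _) hp0.le
  have hK2 : (2:ℝ) ≤ (K:ℝ) := by exact_mod_cast hK
  have hK0 : (0:ℝ) < K := by linarith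
  have ht0_40 : (40:ℝ) ≤ (t0:ℝ) := by rw [ht0]; nlinarith
  have elo : (2.7182818283:ℝ) < Real.exp 1 := Real.exp_one_gt_d9
  have ehi : Real.exp 1 < 2.7182818286 := Real.exp_one_lt_d9
  have he2pos : (0:ℝ) < Real.exp 1 ^ 2 := by positivity
  have he2 : Real.exp 1 ^ 2 ≤ 7.4 := by nlinarith
  have htlR : (t0:ℝ) ≤ (tl:ℝ) := by
    have h1 : ((t0:ℝ)+1) * Real.exp 1 ^ 2 ≤ ((t0:ℝ)+1)^2 := by nlinarith
    have h2 : (t0:ℝ) + 1 ≤ ((t0:ℝ)+1)^2 / Real.exp 1 ^ 2 := by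
      rw [le_div_iff₀ he2pos]; exact h1
    linarith
  have htlnat : t0 ≤ tl := by exact_mod_cast htlR
  have htl1 : (0:ℝ) < (tl:ℝ) + 1 := by linarith
  have hL4 : (4:ℝ) ≤ L := by
    have h6 : Real.exp 1 ^ 6 ≤ ((t0:ℝ)+1)^2 := by
      have e6 : Real.exp 1 ^ 6 = (Real.exp 1 ^ 2)^3 := by ring
      have hc : (Real.exp 1 ^ 2)^3 ≤ (7.4:ℝ)^3 :=
        pow_le_pow_left₀ (le_of_lt he2pos) he2 3
      rw [e6]
      nlinarith [hc, ht0_40]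
    have h4 : Real.exp 1 ^ 4 ≤ (tl:ℝ) + 1 := by
      have h5 : Real.exp 1 ^ 4 ≤ ((t0:ℝ)+1)^2 / Real.exp 1 ^ 2 := by
        rw [le_div_iff₀ he2pos]; nlinarith [h6]
      linarith
    have h5 : Real.exp ((4:ℕ):ℝ) ≤ (tl:ℝ)+1 := by
      rw [← Real.exp_one_pow]; exact h4
    have h7 := (Real.le_log_iff_exp_le htl1).2 h5
    rw [hL]; exact_mod_cast h7
  have hL0 : (0:ℝ) ≤ L := by linarith
  have hlogt0 : 2 * Real.log ((t0:ℝ)+1) - 2 ≤ L := by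
    have hpos : (0:ℝ) < ((t0:ℝ)+1)^2 / Real.exp 1 ^ 2 := by positivity
    have h1 : ((t0:ℝ)+1)^2 / Real.exp 1 ^2 ≤ (tl:ℝ)+1 := by linarith
    have h2 := Real.log_le_log hpos h1
    rw [Real.log_div (by positivity) (by positivity), Real.log_pow, Real.log_pow,
      Real.log_exp] at h2
    rw [hL]
    push_cast at h2
    linarith
  -- the two families of events
  set A1 : ℕ → Set Ω := fun τ => {ω | B τ ω = true} with hA1
  set A2 : ℕ → Set Ω := fun τ => {ω' | B τ ω' = true ∧ X τ ω' ∈ V} with hA2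
  have hA1m : ∀ τ, MeasurableSet (A1 τ) := fun τ => (hBmeas τ) (measurableSet_singleton true)
  have hA2m : ∀ τ, MeasurableSet (A2 τ) := fun τ =>
    ((hBmeas τ) (measurableSet_singleton true)).inter ((hXmeas τ) hV)
  -- independence of the two indicator families
  have hind1 : iIndepFun
      (fun τ => (A1 τ).indicator fun _ => (1:ℝ)) μ := by
    have h := hindep.comp
      (fun τ (p : Bool × E) => Set.indicator {q : Bool × E | q.1 = true} (fun _ => (1:ℝ)) p)
      (fun τ => measurable_const.indicator (measurable_fst (measurableSet_singleton true)))
    have heq : (fun τ => (A1 τ).indicator fun _ => (1:ℝ))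
        = fun τ => (fun p : Bool × E =>
            Set.indicator {q : Bool × E | q.1 = true} (fun _ => (1:ℝ)) p)
          ∘ (fun ω => (B τ ω, X τ ω)) := by
      funext τ ω
      by_cases h : B τ ω = true <;>
        simp [Function.comp, Set.indicator_apply, hA1, h]
    rw [heq]; exact h
  have hsetm : MeasurableSet {q : Bool × E | q.1 = true ∧ q.2 ∈ V} :=
    (measurable_fst (measurableSet_singleton true)).inter (measurable_snd hV)
  have hind2 : iIndepFun
      (fun τ => (A2 τ).indicator fun _ => (1:ℝ)) μ := by
    have h := hindep.comp
      (fun τ (p : Bool × E) =>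
        Set.indicator {q : Bool × E | q.1 = true ∧ q.2 ∈ V} (fun _ => (1:ℝ)) p)
      (fun τ => measurable_const.indicator hsetm)
    have heq : (fun τ => (A2 τ).indicator fun _ => (1:ℝ))
        = fun τ => (fun p : Bool × E =>
            Set.indicator {q : Bool × E | q.1 = true ∧ q.2 ∈ V} (fun _ => (1:ℝ)) p)
          ∘ (fun ω => (B τ ω, X τ ω)) := by
      funext τ ω
      by_cases h : B τ ω = true ∧ X τ ω ∈ V <;>
        simp [Function.comp, Set.indicator_apply, hA2, h]
    rw [heq]; exact h
  -- probabilities of the events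
  have hq0 : (0:ℝ) ≤ pstar := hp0.le
  have hqV : pstar ≤ (PX V).toReal := by
    have h := ENNReal.toReal_mono (measure_ne_top PX V) hpV
    rwa [ENNReal.toReal_ofReal hq0] at h
  have hIccIoc : Finset.Icc 1 tl = Finset.Ioc 0 tl := by
    ext x; simp [Finset.mem_Icc, Finset.mem_Ioc]; omega
  have hmin_nonneg : ∀ τ : ℕ, (0:ℝ) ≤ min 1 ((t0:ℝ)/τ) / K := fun τ =>
    div_nonneg (le_min zero_le_one (by positivity)) hK0.le
  have hmuA1 : ∀ τ ∈ Finset.Ioc 0 tl, (μ (A1 τ)).toReal = min 1 ((t0:ℝ)/τ) / K := by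
    intro τ hτ
    have hτ' : τ ∈ Finset.Icc 1 tl := by rwa [hIccIoc]
    rw [hA1]
    rw [hB τ hτ', ENNReal.toReal_ofReal (hmin_nonneg τ)]
  have hXpre : ∀ τ, μ (X τ ⁻¹' V) = PX V := fun τ => by
    rw [← hXlaw τ, Measure.map_apply (hXmeas τ) hV]
  have hmuA2 : ∀ τ ∈ Finset.Ioc 0 tl,
      (μ (A2 τ)).toReal = (min 1 ((t0:ℝ)/τ) / K) * (PX V).toReal := by
    intro τ hτ
    have hA2eq : A2 τ = (B τ ⁻¹' {true}) ∩ (X τ ⁻¹' V) := by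
      ext ω; simp [hA2, Set.mem_setOf_eq]
    have hmul := (hBX τ).measure_inter_preimage_eq_mul
      (s := {true}) (t := V) (measurableSet_singleton true) hV
    have hBtrue : μ (B τ ⁻¹' {true}) = ENNReal.ofReal (min 1 ((t0:ℝ)/τ)/K) := by
      have hpre : B τ ⁻¹' {true} = {ω | B τ ω = true} := by ext ω; simp
      rw [hpre]
      exact hB τ (by rwa [hIccIoc])
    rw [hA2eq, hmul, hBtrue, hXpre τ, ENNReal.toReal_mul,
      ENNReal.toReal_ofReal (hmin_nonneg τ)]
  -- the mean and its bounds
  set m := ∑ τ ∈ Finset.Ioc 0 tl, (μ (A1 τ)).toReal with hm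
  set H := ∑ τ ∈ Finset.Ioc t0 tl, ((τ:ℝ))⁻¹ with hH
  have hmval : m = 2*C0*(1 + H) := by
    have hsum : m = (∑ τ ∈ Finset.Ioc 0 tl, min 1 ((t0:ℝ)/τ)) / K := by
      rw [hm, Finset.sum_congr rfl hmuA1, ← Finset.sum_div]
    have hsplit : (∑ τ ∈ Finset.Ioc 0 t0, min 1 ((t0:ℝ)/τ))
        + (∑ τ ∈ Finset.Ioc t0 tl, min 1 ((t0:ℝ)/τ))
        = ∑ τ ∈ Finset.Ioc 0 tl, min 1 ((t0:ℝ)/τ) :=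
      Finset.sum_Ioc_consecutive _ (Nat.zero_le t0) htlnat
    have hfirst : ∑ τ ∈ Finset.Ioc 0 t0, min 1 ((t0:ℝ)/τ) = (t0:ℝ) := by
      have h1 : ∀ τ ∈ Finset.Ioc 0 t0, min 1 ((t0:ℝ)/τ) = 1 := by
        intro τ hτ
        obtain ⟨h0, hle⟩ := Finset.mem_Ioc.mp hτ
        apply min_eq_left
        rw [one_le_div (by exact_mod_cast h0 : (0:ℝ) < (τ:ℝ))]
        exact_mod_cast hle
      rw [Finset.sum_congr rfl h1, Finset.sum_const, Nat.card_Ioc]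
      simp
    have hsecond : ∑ τ ∈ Finset.Ioc t0 tl, min 1 ((t0:ℝ)/τ) = (t0:ℝ) * H := by
      rw [hH, Finset.mul_sum]
      apply Finset.sum_congr rfl
      intro τ hτ
      obtain ⟨h0, hle⟩ := Finset.mem_Ioc.mp hτ
      have hτpos : (0:ℝ) < (τ:ℝ) := by
        have : 0 < τ := lt_of_le_of_lt (Nat.zero_le t0) h0
        exact_mod_cast this
      rw [min_eq_right (by rw [div_le_one hτpos]; exact_mod_cast h0.le), div_eq_mul_inv]
    rw [hsum, ← hsplit, hfirst, hsecond, ht0]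
    field_simp
  have hHlo : L - Real.log ((t0:ℝ)+1) ≤ H := by
    have h := log_sub_le_sum_inv t0 tl
    rw [hH, hL]; exact h
  have htl40 : (40:ℝ) ≤ (tl:ℝ) := le_trans ht0_40 htlR
  have hHhi : H ≤ L := by
    have h1 := sum_inv_le_log_sub t0 (by exact_mod_cast (by linarith : (1:ℝ) ≤ (t0:ℝ))) tl htlnat
    have h2 : Real.log (tl:ℝ) ≤ L := by
      rw [hL]; exact Real.log_le_log (by linarith) (by linarith)
    have h3 : 0 ≤ Real.log (t0:ℝ) := Real.log_nonneg (by linarith)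
    rw [hH]; linarith
  have hm_lo : C0 * L ≤ m := by
    have k1 : 2*C0*(L - Real.log ((t0:ℝ)+1)) ≤ 2*C0*H :=
      mul_le_mul_of_nonneg_left hHlo (by linarith)
    have k2 : C0*(2*Real.log ((t0:ℝ)+1) - 2) ≤ C0*L :=
      mul_le_mul_of_nonneg_left hlogt0 (by linarith)
    rw [hmval]; linarith [k1, k2]
  have hm_hi : m ≤ 2*C0*(1+L) := by
    rw [hmval]
    linarith [mul_le_mul_of_nonneg_left hHhi (show (0:ℝ) ≤ 2*C0 by linarith)]
  have hm_nonneg : (0:ℝ) ≤ m := by nlinarith [hm_lo, mul_nonneg (show (0:ℝ) ≤ C0 by linarith) hL0]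
  have hm2 : ∑ τ ∈ Finset.Ioc 0 tl, (μ (A2 τ)).toReal = m * (PX V).toReal := by
    rw [Finset.sum_congr rfl hmuA2, ← Finset.sum_mul]
    congr 1
    rw [hm]
    exact (Finset.sum_congr rfl hmuA1).symm
  have hm2_lo : pstar * (C0 * L) ≤ m * (PX V).toReal := by
    have h := mul_le_mul hm_lo hqV hq0 hm_nonneg
    linarith [h, mul_comm (C0*L) pstar]
  -- numeric exponential facts
  have hee : Real.exp (-1) * Real.exp 1 = 1 := by
    rw [← Real.exp_add]; norm_num
  have heinv : Real.exp (-1) ≤ 0.37 := by nlinarith [Real.exp_pos (-1)]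
  have hexpL : Real.exp (-L) = 1/((tl:ℝ)+1) := by
    rw [Real.exp_neg, hL, Real.exp_log htl1, one_div]
  -- rewriting sums
  have hrw1 : ∀ ω, (∑ τ ∈ Finset.Icc 1 tl, if B τ ω then (1:ℝ) else 0)
      = ∑ τ ∈ Finset.Ioc 0 tl, (A1 τ).indicator (fun _ => (1:ℝ)) ω := by
    intro ω
    rw [hIccIoc]
    apply Finset.sum_congr rfl
    intro τ _
    by_cases h : B τ ω = true <;> simp [h, hA1, Set.indicator_apply]
  have hrw2 : ∀ ω, (∑ τ ∈ Finset.Icc 1 tl,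
        Set.indicator {ω' | B τ ω' = true ∧ X τ ω' ∈ V} (fun _ => (1:ℝ)) ω)
      = ∑ τ ∈ Finset.Ioc 0 tl, (A2 τ).indicator (fun _ => (1:ℝ)) ω := by
    intro ω
    rw [hIccIoc]
  -- the four tail estimates
  have hE1a : μ {ω | (∑ τ ∈ Finset.Icc 1 tl, if B τ ω then (1:ℝ) else 0) < C0 * L / 2}
      ≤ ENNReal.ofReal (1/((tl:ℝ)+1)) := by
    have hsub : {ω | (∑ τ ∈ Finset.Icc 1 tl, if B τ ω then (1:ℝ) else 0) < C0 * L / 2}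
        ⊆ {ω | (∑ τ ∈ Finset.Ioc 0 tl, (A1 τ).indicator (fun _ => (1:ℝ)) ω) ≤ C0 * L / 2} := by
      intro ω hω
      rw [Set.mem_setOf_eq, ← hrw1 ω]
      exact le_of_lt hω
    refine le_trans (measure_mono hsub)
      (le_trans (chernoff_lower A1 hA1m hind1 _ _) ?_)
    apply ENNReal.ofReal_le_ofReal
    rw [← hm, ← hexpL]
    apply Real.exp_le_exp.2
    have hstep : (Real.exp (-1) - 1) * m ≤ (Real.exp (-1) - 1) * (C0*L) :=
      mul_le_mul_of_nonpos_left hm_lo (by linarith)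
    have h13 : 1 ≤ C0 * (1/2 - Real.exp (-1)) := by
      nlinarith [mul_nonneg (show (0:ℝ) ≤ C0 - 10 by linarith)
        (show (0:ℝ) ≤ 1/2 - Real.exp (-1) by linarith)]
    have h14 := mul_le_mul_of_nonneg_right h13 hL0
    linarith [hstep, h14]
  have hE1b : μ {ω | 3 * (2 * C0) * L < (∑ τ ∈ Finset.Icc 1 tl, if B τ ω then (1:ℝ) else 0)}
      ≤ ENNReal.ofReal (1/((tl:ℝ)+1)) := by
    have hsub : {ω | 3 * (2 * C0) * L < (∑ τ ∈ Finset.Icc 1 tl, if B τ ω then (1:ℝ) else 0)}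
        ⊆ {ω | (6*C0*L : ℝ) ≤ (∑ τ ∈ Finset.Ioc 0 tl, (A1 τ).indicator (fun _ => (1:ℝ)) ω)} := by
      intro ω hω
      rw [Set.mem_setOf_eq, ← hrw1 ω]
      rw [Set.mem_setOf_eq] at hω
      linarith
    refine le_trans (measure_mono hsub)
      (le_trans (chernoff_upper A1 hA1m hind1 _ _) ?_)
    apply ENNReal.ofReal_le_ofReal
    rw [← hm, ← hexpL]
    apply Real.exp_le_exp.2
    have hs1 : (Real.exp 1 - 1) * m ≤ 1.72 * (2*C0*(1+L)) :=
      mul_le_mul (by nlinarith) hm_hi hm_nonneg (by norm_num)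
    have hprod : (0:ℝ) ≤ (C0 - 10) * (L - 4) :=
      mul_nonneg (by linarith) (by linarith)
    nlinarith [hs1, hprod]
  have hE2 : μ {ω | (∑ τ ∈ Finset.Icc 1 tl,
        Set.indicator {ω' | B τ ω' = true ∧ X τ ω' ∈ V} (fun _ => (1:ℝ)) ω)
          < pstar * C0 * L / 2}
      ≤ ENNReal.ofReal (1/((tl:ℝ)+1)) := by
    have hsub : {ω | (∑ τ ∈ Finset.Icc 1 tl,
          Set.indicator {ω' | B τ ω' = true ∧ X τ ω' ∈ V} (fun _ => (1:ℝ)) ω)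
            < pstar * C0 * L / 2}
        ⊆ {ω | (∑ τ ∈ Finset.Ioc 0 tl, (A2 τ).indicator (fun _ => (1:ℝ)) ω)
            ≤ pstar * C0 * L / 2} := by
      intro ω hω
      rw [Set.mem_setOf_eq, ← hrw2 ω]
      exact le_of_lt hω
    refine le_trans (measure_mono hsub)
      (le_trans (chernoff_lower A2 hA2m hind2 _ _) ?_)
    apply ENNReal.ofReal_le_ofReal
    rw [hm2, ← hexpL]
    apply Real.exp_le_exp.2
    have hstep : (Real.exp (-1) - 1) * (m * (PX V).toReal)
        ≤ (Real.exp (-1) - 1) * (pstar * (C0*L)) :=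
      mul_le_mul_of_nonpos_left hm2_lo (by linarith)
    have h15 : 1 ≤ (pstar * C0) * (1/2 - Real.exp (-1)) := by
      nlinarith [mul_nonneg (by linarith : (0:ℝ) ≤ pstar * C0 - 8)
        (by linarith : (0:ℝ) ≤ 1/2 - Real.exp (-1))]
    have h16 := mul_le_mul_of_nonneg_right h15 hL0
    linarith [hstep, h16]
  have hhalf : (0:ℝ) ≤ 1/((tl:ℝ)+1) := by positivity
  refine ⟨?_, ?_, ?_⟩
  · -- part (1)
    have hor : {ω | (∑ τ ∈ Finset.Icc 1 tl, if B τ ω then (1:ℝ) else 0) < C0 * L / 2 ∨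
          3 * (2 * C0) * L < (∑ τ ∈ Finset.Icc 1 tl, if B τ ω then (1:ℝ) else 0)}
        = {ω | (∑ τ ∈ Finset.Icc 1 tl, if B τ ω then (1:ℝ) else 0) < C0 * L / 2}
          ∪ {ω | 3 * (2 * C0) * L < (∑ τ ∈ Finset.Icc 1 tl, if B τ ω then (1:ℝ) else 0)} :=
      Set.setOf_or
    rw [hor]
    refine le_trans (measure_union_le _ _) ?_
    refine le_trans (add_le_add hE1a hE1b) ?_
    rw [← ENNReal.ofReal_add hhalf hhalf]
    apply ENNReal.ofReal_le_ofReal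
    rw [← add_div]
    norm_num
  · exact hE2
  · -- part (3)
    have hsub3 : {ω | (∑ τ ∈ Finset.Icc 1 tl,
          Set.indicator {ω' | B τ ω' = true ∧ X τ ω' ∈ V} (fun _ => (1:ℝ)) ω) /
            (∑ τ ∈ Finset.Icc 1 tl, if B τ ω then (1:ℝ) else 0) < pstar / 12}
        ⊆ ({ω | (∑ τ ∈ Finset.Icc 1 tl, if B τ ω then (1:ℝ) else 0) < C0 * L / 2}
            ∪ {ω | 3 * (2 * C0) * L < (∑ τ ∈ Finset.Icc 1 tl, if B τ ω then (1:ℝ) else 0)})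
          ∪ {ω | (∑ τ ∈ Finset.Icc 1 tl,
              Set.indicator {ω' | B τ ω' = true ∧ X τ ω' ∈ V} (fun _ => (1:ℝ)) ω)
                < pstar * C0 * L / 2} := by
      intro ω hω
      by_contra hcon
      simp only [Set.mem_union, Set.mem_setOf_eq, not_or, not_lt] at hcon
      obtain ⟨⟨h1, h2⟩, h3⟩ := hcon
      rw [Set.mem_setOf_eq] at hω
      have hS0 : (0:ℝ) < (∑ τ ∈ Finset.Icc 1 tl, if B τ ω then (1:ℝ) else 0) := by
        nlinarith [h1, hC0_10, hL4]
      have hcontra : pstar/12 ≤ (∑ τ ∈ Finset.Icc 1 tl,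
          Set.indicator {ω' | B τ ω' = true ∧ X τ ω' ∈ V} (fun _ => (1:ℝ)) ω) /
            (∑ τ ∈ Finset.Icc 1 tl, if B τ ω then (1:ℝ) else 0) := by
        rw [le_div_iff₀ hS0]
        nlinarith [h2, h3, mul_le_mul_of_nonneg_left h2 hq0]
      linarith
    refine le_trans (measure_mono hsub3) ?_
    refine le_trans (measure_union_le _ _) ?_
    refine le_trans (add_le_add (measure_union_le _ _) le_rfl) ?_
    refine le_trans (add_le_add (add_le_add hE1a hE1b) hE2) ?_
    rw [← ENNReal.ofReal_add hhalf hhalf, ← ENNReal.ofReal_add (by positivity) hhalf]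
    apply ENNReal.ofReal_le_ofReal
    rw [← add_div, ← add_div]
    norm_num

end BanditPaper
end
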